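/- arXiv:2006.07486 — 5 statements merged into one kernel-verified Lean document; each statement's English description precedes it below -/
import Mathlib

section
/- For all positive integers n, k, D, η, α such that k/(4·D·α·η) is an integer and n ≥ 3k·(k/(2·D·α·η))^D, there exists a k-edge-connected simple graph G on n vertices with diameter at most 2D+2 such that, for every collection T_1, …, T_{k/α} of k/α spanning trees of G in which every edge of G lies in at most η of the trees, at least one tree T_i has diameter at least (1/4)·(k/(2·D·α·η))^D. -/
open SimpleGraph

/-- A simple graph `G` is `k`-edge-connected: it has at least two vertices and
deleting any set of fewer than `k` edges leaves it connected. -/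
def IsKEdgeConnected {V : Type} (G : SimpleGraph V) (k : ℕ) : Prop :=
  2 ≤ Nat.card V ∧
    ∀ F : Set (Sym2 V), F.Finite → F ⊆ G.edgeSet → F.ncard < k →
      (G.deleteEdges F).Connected

/-- `T` is a spanning tree of `G`. -/
def IsSpanningTree {V : Type} (G T : SimpleGraph V) : Prop :=
  T ≤ G ∧ T.IsTree

namespace Stmt2Aux

/-- Block index of a vertex value. -/
def blkN (B L x : ℕ) : ℕ := min (x / B) (L - 1)

/-- Hierarchical shortcut relation (on vertex values): `u` is the hub of a block
`g*q^s + d*q^(s-1)` and `v` is the hub of its level-`s` ancestor block `g*q^s`. -/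
def SCrel (q D B u v : ℕ) : Prop :=
  ∃ s g d : ℕ, 1 ≤ s ∧ s ≤ D ∧ g < q ^ (D - s) ∧ 1 ≤ d ∧ d < q ∧
    u = (g * q ^ s + d * q ^ (s - 1)) * B ∧ v = (g * q ^ s) * B

/-- The graph: blocks of consecutive vertices, all pairs in the same or adjacent
blocks joined, plus hierarchical hub shortcuts. -/
def GG (n q D B L : ℕ) : SimpleGraph (Fin n) where
  Adj u v := u ≠ v ∧
    ((blkN B L u ≤ blkN B L v + 1 ∧ blkN B L v ≤ blkN B L u + 1) ∨
      SCrel q D B u v ∨ SCrel q D B v u)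
  symm := ⟨by
    rintro u v ⟨h1, h2⟩
    exact ⟨h1.symm, by tauto⟩⟩
  loopless := ⟨fun u h => h.1 rfl⟩

lemma GG_adj {n q D B L : ℕ} {u v : Fin n} : (GG n q D B L).Adj u v ↔ (u ≠ v ∧
    ((blkN B L u ≤ blkN B L v + 1 ∧ blkN B L v ≤ blkN B L u + 1) ∨
      SCrel q D B u v ∨ SCrel q D B v u)) := Iff.rfl

end Stmt2Aux

open Stmt2Aux

set_option maxHeartbeats 1000000 in
theorem stmt_2 (n k D η α : ℕ) (hn : 0 < n) (hk : 0 < k) (hD : 0 < D)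
    (hη : 0 < η) (hα : 0 < α)
    (hdvd : 4 * D * α * η ∣ k)
    (hbig : 3 * k * (k / (2 * D * α * η)) ^ D ≤ n) :
    ∃ G : SimpleGraph (Fin n),
      IsKEdgeConnected G k ∧
      (∀ u v : Fin n, G.dist u v ≤ 2 * D + 2) ∧
      ∀ T : Fin (k / α) → SimpleGraph (Fin n),
        (∀ i, IsSpanningTree G (T i)) →
        (∀ e ∈ G.edgeSet, Nat.card {i : Fin (k / α) // e ∈ (T i).edgeSet} ≤ η) →
        ∃ (i : Fin (k / α)) (u v : Fin n),
          ((k / (2 * D * α * η) : ℕ) : ℝ) ^ D / 4 ≤ (T i).dist u v := by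
  classical
  -- extract `m` with `k = 4*D*α*η*m`
  obtain ⟨m, hm⟩ := hdvd
  have hm1 : 1 ≤ m := by
    rcases Nat.eq_zero_or_pos m with h | h
    · subst h; simp at hm; omega
    · exact h
  set q : ℕ := 2 * m with hqdef
  have hq2 : 2 ≤ q := by omega
  have hq : k / (2 * D * α * η) = q := by
    have : k = (2 * D * α * η) * q := by rw [hm]; ring
    rw [this, Nat.mul_div_cancel_left _ (by positivity)]
  have htα : k / α = 4 * D * η * m := by
    have : k = α * (4 * D * η * m) := by rw [hm]; ring
    rw [this, Nat.mul_div_cancel_left _ hα]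
  set L : ℕ := q ^ D with hLdef
  have hL2 : 2 ≤ L := by
    calc 2 ≤ q ^ 1 := by simpa using hq2
    _ ≤ q ^ D := Nat.pow_le_pow_right (by omega) hD
  set B : ℕ := n / L with hBdef
  have hBk : 3 * k ≤ B := by
    rw [hBdef]
    rw [Nat.le_div_iff_mul_le (by omega)]
    calc 3 * k * L = 3 * k * (k / (2 * D * α * η)) ^ D := by rw [hq, hLdef]
    _ ≤ n := hbig
  have hB1 : 1 ≤ B := le_trans (by omega) hBk
  have hLB : L * B ≤ n := by
    rw [hBdef, Nat.mul_comm]; exact Nat.div_mul_le_self n L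
  have hn2 : 2 ≤ n := le_trans (le_trans hL2 (Nat.le_mul_of_pos_right L hB1)) hLB
  set G : SimpleGraph (Fin n) := GG n q D B L with hGdef
  have hblk_le : ∀ x : ℕ, blkN B L x ≤ L - 1 := fun x => min_le_right _ _
  have hblk_mul : ∀ j i : ℕ, j < L → i < B → blkN B L (j * B + i) = j := by
    intro j i hj hi
    unfold blkN
    rw [Nat.add_comm, Nat.add_mul_div_right _ _ (by omega : 0 < B),
      Nat.div_eq_of_lt hi]
    simpa using min_eq_left (by omega : 0 + j ≤ L - 1)
  have hubIn : ∀ j : ℕ, j < L → j * B < n :=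
    fun j hj => lt_of_lt_of_le (Nat.mul_lt_mul_of_lt_of_le hj (le_refl B) hB1) hLB
  have hblk_hub : ∀ j : ℕ, j < L → blkN B L (j * B) = j := by
    intro j hj; simpa using hblk_mul j 0 hj hB1
  have hblk0 : blkN B L (0 : ℕ) = 0 := by
    unfold blkN; simp [Nat.zero_div]
  -- find a vertex in block jc avoiding F-edges to a and b
  have goodW : ∀ (F : Set (Sym2 (Fin n))), F.Finite → F.ncard < k →
      ∀ (jc : ℕ), jc < L → ∀ a b : Fin n, blkN B L a ≠ jc → blkN B L b ≠ jc →
      ∃ w : Fin n, blkN B L w = jc ∧ s(a, w) ∉ F ∧ s(b, w) ∉ F := by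
    intro F hFin hFk jc hjc a b ha hb
    have hmem : ∀ i : ℕ, i < B → jc * B + i < n := by
      intro i hi
      calc jc * B + i < (jc + 1) * B := by nlinarith
      _ ≤ L * B := Nat.mul_le_mul_right B (by omega)
      _ ≤ n := hLB
    set S : Finset (Fin n) := (Finset.range B).attach.image
      (fun i => (⟨jc * B + i.1, hmem i.1 (Finset.mem_range.mp i.2)⟩ : Fin n)) with hS
    have hScard : S.card = B := by
      have hinj : Function.Injective
          (fun i : {x // x ∈ Finset.range B} => (⟨jc * B + i.1, hmem i.1 (Finset.mem_range.mp i.2)⟩ : Fin n)) := by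
        intro i j h
        have := congrArg Fin.val h
        simp only at this
        exact Subtype.ext (by omega)
      rw [hS, Finset.card_image_of_injective _ hinj, Finset.card_attach, Finset.card_range]
    have hSblk : ∀ w ∈ S, blkN B L w = jc := by
      intro w hw
      rw [hS] at hw
      obtain ⟨i, _, rfl⟩ := Finset.mem_image.mp hw
      exact hblk_mul jc i.1 hjc (Finset.mem_range.mp i.2)
    have hbad : ∀ c : Fin n, (S.filter (fun w => s(c, w) ∈ F)).card ≤ F.ncard := by
      intro c
      rw [Set.ncard_eq_toFinset_card' F]
      refine Finset.card_le_card_of_injOn (fun w => s(c, w)) ?_ ?_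
      · intro w hw
        simp only [Finset.mem_coe, Set.mem_toFinset]
        exact (Finset.mem_filter.mp hw).2
      · intro w _ w' _ h
        exact Sym2.congr_right.mp h
    have hkey : (S \ ((S.filter (fun w => s(a, w) ∈ F)) ∪ (S.filter (fun w => s(b, w) ∈ F)))).Nonempty := by
      rw [← Finset.card_pos]
      have h1 := hbad a
      have h2 := hbad b
      have h3 := Finset.le_card_sdiff ((S.filter (fun w => s(a, w) ∈ F)) ∪ (S.filter (fun w => s(b, w) ∈ F))) S
      have h4 := Finset.card_union_le (S.filter (fun w => s(a, w) ∈ F)) (S.filter (fun w => s(b, w) ∈ F))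
      omega
    obtain ⟨w, hw⟩ := hkey
    rw [Finset.mem_sdiff, Finset.mem_union] at hw
    refine ⟨w, hSblk w hw.1, ?_, ?_⟩
    · intro hc; exact hw.2 (Or.inl (Finset.mem_filter.mpr ⟨hw.1, hc⟩))
    · intro hc; exact hw.2 (Or.inr (Finset.mem_filter.mpr ⟨hw.1, hc⟩))
  -- deleting few edges keeps G connected
  have hdel : ∀ (F : Set (Sym2 (Fin n))), F.Finite → F.ncard < k →
      (G.deleteEdges F).Connected := by
    intro F hFin hFk
    have hreach : ∀ (j : ℕ) (u : Fin n), blkN B L u = j →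
        (G.deleteEdges F).Reachable u ⟨0, by omega⟩ := by
      intro j
      induction j with
      | zero =>
        intro u hu
        by_cases he : u = (⟨0, by omega⟩ : Fin n)
        · rw [he]
        · have hz : blkN B L ((⟨0, by omega⟩ : Fin n) : ℕ) = 0 := hblk0
          obtain ⟨w, hwb, hwa, hwb2⟩ := goodW F hFin hFk 1 (by omega) u ⟨0, by omega⟩
            (by rw [hu]; omega) (by rw [hz]; omega)
          have hne1 : u ≠ w := fun h => by rw [h, hwb] at hu; omega
          have hne2 : (⟨0, by omega⟩ : Fin n) ≠ w := fun h => by rw [h, hwb] at hz; omega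
          have hadj1 : (G.deleteEdges F).Adj u w := by
            rw [SimpleGraph.deleteEdges_adj]
            exact ⟨GG_adj.mpr ⟨hne1, Or.inl (by rw [hu, hwb]; omega)⟩, hwa⟩
          have hadj2 : (G.deleteEdges F).Adj (⟨0, by omega⟩ : Fin n) w := by
            rw [SimpleGraph.deleteEdges_adj]
            exact ⟨GG_adj.mpr ⟨hne2, Or.inl (by rw [hz, hwb]; omega)⟩, hwb2⟩
          exact hadj1.reachable.trans hadj2.reachable.symm
      | succ j ih =>
        intro u hu
        have hjL : j + 1 ≤ L - 1 := hu ▸ hblk_le u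
        obtain ⟨w, hwb, hwa, _⟩ := goodW F hFin hFk j (by omega) u u
          (by rw [hu]; omega) (by rw [hu]; omega)
        have hne1 : u ≠ w := fun h => by rw [h, hwb] at hu; omega
        have hadj1 : (G.deleteEdges F).Adj u w := by
          rw [SimpleGraph.deleteEdges_adj]
          exact ⟨GG_adj.mpr ⟨hne1, Or.inl (by rw [hu, hwb]; omega)⟩, hwa⟩
        exact hadj1.reachable.trans (ih w hwb)
    rw [SimpleGraph.connected_iff]
    exact ⟨fun u v => (hreach _ u rfl).trans (hreach _ v rfl).symm, ⟨⟨0, by omega⟩⟩⟩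
  have hGconn : G.Connected := by
    have := hdel ∅ Set.finite_empty (by simpa using hk)
    simpa [SimpleGraph.deleteEdges_empty] using this
  have hdistadj : ∀ u v : Fin n, G.Adj u v → G.dist u v ≤ 1 := by
    intro u v h
    simpa using SimpleGraph.dist_le (SimpleGraph.Walk.cons h SimpleGraph.Walk.nil)
  have climb : ∀ s : ℕ, s ≤ D → ∀ j : ℕ, ∀ hj : j < L, q ^ (D - s) ∣ j →
      G.dist ⟨j * B, hubIn j hj⟩ ⟨0, by omega⟩ ≤ s := by
    intro s
    induction s with
    | zero =>
      intro _ j hj hdvd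
      have hj0 : j = 0 := Nat.eq_zero_of_dvd_of_lt hdvd (by simpa using hj)
      subst hj0
      have : (⟨0 * B, hubIn 0 hj⟩ : Fin n) = ⟨0, by omega⟩ := Fin.ext (by simp)
      rw [this, SimpleGraph.dist_self]
    | succ s ihs =>
      intro hsD j hj hdvd
      obtain ⟨w, hw⟩ := hdvd
      set d := w % q with hddef
      set g := w / q with hgdef
      have hwdg : w = q * g + d := by
        rw [hgdef, hddef]; exact (Nat.div_add_mod w q).symm
      have hDs : D - s = (D - s - 1) + 1 := by omega
      have hpow : q ^ (D - s) = q ^ (D - s - 1) * q := by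
        conv_lhs => rw [hDs, pow_succ]
      have hDss : D - (s + 1) = D - s - 1 := by omega
      have hwlt : w < q ^ (s + 1) := by
        have hLq : q ^ (D - (s + 1)) * q ^ (s + 1) = q ^ D := by
          rw [← pow_add]; congr 1; omega
        have hjq : q ^ (D - (s + 1)) * w < q ^ (D - (s + 1)) * q ^ (s + 1) := by
          rw [hLq, ← hw]; exact lt_of_lt_of_eq hj hLdef
        exact Nat.lt_of_mul_lt_mul_left hjq
      have hglt : g < q ^ s := by
        rw [hgdef]
        rw [Nat.div_lt_iff_lt_mul (by omega : 0 < q)]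
        calc w < q ^ (s + 1) := hwlt
        _ = q ^ s * q := pow_succ q s
      by_cases hd : d = 0
      · have hdvd' : q ^ (D - s) ∣ j := by
          refine ⟨g, ?_⟩
          rw [hw, hDss, hwdg, hd, hpow]; ring
        exact le_trans (ihs (by omega) j hj hdvd') (by omega)
      · have hj_decomp : j = g * q ^ (D - s) + d * q ^ (D - s - 1) := by
          rw [hw, hDss, hwdg, hpow]; ring
        have hj'lt : g * q ^ (D - s) < L := by
          calc g * q ^ (D - s) < q ^ s * q ^ (D - s) :=
                Nat.mul_lt_mul_of_lt_of_le hglt (le_refl _) (by positivity)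
          _ = q ^ D := by rw [← pow_add]; congr 1; omega
        have hjne : j ≠ g * q ^ (D - s) := by
          have : 1 ≤ d * q ^ (D - s - 1) := by
            have : 0 < q ^ (D - s - 1) := by positivity
            have : 1 ≤ d := by omega
            nlinarith
          omega
        have hadj : G.Adj ⟨j * B, hubIn j hj⟩ ⟨g * q ^ (D - s) * B, hubIn _ hj'lt⟩ := by
          refine GG_adj.mpr ⟨?_, Or.inr (Or.inl ?_)⟩
          · intro h
            have := congrArg Fin.val h
            simp only at this
            exact hjne (Nat.eq_of_mul_eq_mul_right (by omega) this)
          · exact ⟨D - s, g, d, by omega, by omega,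
              (by rw [(by omega : D - (D - s) = s)]; exact hglt),
              (by omega),
              (by rw [hddef]; exact Nat.mod_lt _ (by omega)),
              (by simp only; rw [hj_decomp]), by simp⟩
        calc G.dist ⟨j * B, hubIn j hj⟩ ⟨0, by omega⟩
            ≤ G.dist ⟨j * B, hubIn j hj⟩ ⟨g * q ^ (D - s) * B, hubIn _ hj'lt⟩ +
              G.dist ⟨g * q ^ (D - s) * B, hubIn _ hj'lt⟩ ⟨0, by omega⟩ :=
              hGconn.dist_triangle
        _ ≤ 1 + s := Nat.add_le_add (hdistadj _ _ hadj)
              (ihs (by omega) _ hj'lt ⟨g, by ring⟩)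
        _ = s + 1 := by omega
  have hto0 : ∀ u : Fin n, G.dist u ⟨0, by omega⟩ ≤ D + 1 := by
    intro u
    have hjL : blkN B L u < L := lt_of_le_of_lt (hblk_le _) (by omega)
    have h1 : G.dist u ⟨blkN B L u * B, hubIn _ hjL⟩ ≤ 1 := by
      by_cases he : u = (⟨blkN B L u * B, hubIn _ hjL⟩ : Fin n)
      · rw [← he, SimpleGraph.dist_self]; omega
      · exact hdistadj _ _ (GG_adj.mpr ⟨he, Or.inl (by
          rw [hblk_hub _ hjL]; omega)⟩)
    have h2 : G.dist ⟨blkN B L u * B, hubIn _ hjL⟩ ⟨0, by omega⟩ ≤ D :=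
      climb D (le_refl D) _ hjL (by simpa using Dvd.intro _ rfl)
    calc G.dist u ⟨0, by omega⟩
        ≤ G.dist u ⟨blkN B L u * B, hubIn _ hjL⟩ +
          G.dist ⟨blkN B L u * B, hubIn _ hjL⟩ ⟨0, by omega⟩ := hGconn.dist_triangle
    _ ≤ D + 1 := by omega
  have hdiam : ∀ u v : Fin n, G.dist u v ≤ 2 * D + 2 := by
    intro u v
    calc G.dist u v ≤ G.dist u ⟨0, by omega⟩ + G.dist ⟨0, by omega⟩ v :=
          hGconn.dist_triangle
    _ ≤ (D + 1) + (D + 1) := by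
          have := hto0 v
          rw [SimpleGraph.dist_comm] at this
          exact Nat.add_le_add (hto0 u) this
    _ = 2 * D + 2 := by ring
  refine ⟨G, ⟨by simpa [Nat.card_eq_fintype_card] using hn2,
      fun F hFin _ hFk => hdel F hFin hFk⟩, hdiam, ?_⟩
  intro T hT hcong
  have h0n : (0 : ℕ) < n := by omega
  -- total hub function
  set hub : ℕ → Fin n := fun j => if h : j * B < n then ⟨j * B, h⟩ else ⟨0, h0n⟩ with hhub
  have hubval : ∀ j : ℕ, j < L → ((hub j : Fin n) : ℕ) = j * B := by
    intro j hj
    rw [hhub]; simp only [dif_pos (hubIn j hj)]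
  -- index bounds
  have hidx : ∀ s g d : ℕ, 1 ≤ s → s ≤ D → g < q ^ (D - s) → 1 ≤ d → d < q →
      g * q ^ s + d * q ^ (s - 1) < L ∧ g * q ^ s < L := by
    intro s g d hs1 hsD' hg hd1 hdq
    have hss : s - 1 + 1 = s := by omega
    have hsp : q ^ s = q ^ (s - 1) * q := by conv_lhs => rw [← hss, pow_succ]
    have hE1 : 1 ≤ q ^ (s - 1) := Nat.one_le_pow _ _ (by omega)
    obtain ⟨A', hA'⟩ : ∃ A', q ^ (D - s) = A' + 1 :=
      ⟨q ^ (D - s) - 1, by have := Nat.one_le_pow (D - s) q (by omega : 0 < q); omega⟩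
    have h1 : g * q ^ s + d * q ^ (s - 1) + q ^ (s - 1) ≤ L := by
      calc g * q ^ s + d * q ^ (s - 1) + q ^ (s - 1)
          = g * q ^ s + (d + 1) * q ^ (s - 1) := by ring
      _ ≤ A' * q ^ s + q * q ^ (s - 1) :=
            Nat.add_le_add (Nat.mul_le_mul_right _ (by omega))
              (Nat.mul_le_mul_right _ (by omega))
      _ = (A' + 1) * q ^ s := by rw [add_mul, one_mul, mul_comm q, ← hsp]
      _ = q ^ (D - s) * q ^ s := by rw [hA']
      _ = L := by rw [← pow_add, hLdef]; congr 1; omega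
    have hE0 : 1 ≤ d * q ^ (s - 1) := by
      calc 1 = 1 * 1 := by ring
      _ ≤ d * q ^ (s - 1) := Nat.mul_le_mul hd1 hE1
    omega
  -- all shortcut index edges are edges of G
  have hedge : ∀ s g d : ℕ, 1 ≤ s → s ≤ D → g < q ^ (D - s) → 1 ≤ d → d < q →
      G.Adj (hub (g * q ^ s + d * q ^ (s - 1))) (hub (g * q ^ s)) := by
    intro s g d hs1 hsD' hg hd1 hdq
    obtain ⟨hj1, hj2⟩ := hidx s g d hs1 hsD' hg hd1 hdq
    have hE0 : 1 ≤ d * q ^ (s - 1) := by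
      calc 1 = 1 * 1 := by ring
      _ ≤ d * q ^ (s - 1) := Nat.mul_le_mul hd1 (Nat.one_le_pow _ _ (by omega))
    refine GG_adj.mpr ⟨?_, Or.inr (Or.inl ?_)⟩
    · intro h
      have := congrArg Fin.val h
      rw [hubval _ hj1, hubval _ hj2] at this
      have := Nat.eq_of_mul_eq_mul_right (by omega : 0 < B) this
      omega
    · exact ⟨s, g, d, hs1, hsD', hg, hd1, hdq, hubval _ hj1, hubval _ hj2⟩
  -- span weight of each tree
  set W : Fin (k / α) → ℕ := fun i =>
    ∑ s ∈ Finset.Icc 1 D, ∑ g ∈ Finset.range (q ^ (D - s)), ∑ d ∈ Finset.Ico 1 q,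
      (if (T i).Adj (hub (g * q ^ s + d * q ^ (s - 1))) (hub (g * q ^ s))
        then d * q ^ (s - 1) else 0) with hW
  -- Gauss sum
  have hgauss : (∑ d ∈ Finset.Ico 1 q, d) * 2 = q * (q - 1) := by
    have h0 : ∑ d ∈ Finset.range q, d = ∑ d ∈ Finset.Ico 1 q, d := by
      have he : Finset.Ico 0 q = insert 0 (Finset.Ico 1 q) := by
        rw [show (1 : ℕ) = 0 + 1 from rfl, Finset.Ico_add_one_left_eq_Ioo]
        exact (Finset.Ioo_insert_left (by omega : (0:ℕ) < q)).symm
      rw [Finset.range_eq_Ico, he, Finset.sum_insert (by simp), zero_add]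
    rw [← h0]
    exact Finset.sum_range_id_mul_two q
  -- total congestion bound and pigeonhole
  have hex : ∃ i : Fin (k / α), 4 * W i ≤ L - q ^ (D - 1) := by
    by_contra hcon
    push_neg at hcon
    have hsum1 : Fintype.card (Fin (k / α)) * (L - q ^ (D - 1) + 1) ≤
        ∑ i : Fin (k / α), 4 * W i := by
      calc Fintype.card (Fin (k / α)) * (L - q ^ (D - 1) + 1)
          = ∑ _i : Fin (k / α), (L - q ^ (D - 1) + 1) := by
            rw [Finset.sum_const, Finset.card_univ, smul_eq_mul]
      _ ≤ ∑ i : Fin (k / α), 4 * W i :=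
            Finset.sum_le_sum fun i _ => by have := hcon i; omega
    have hsum2 : ∑ i : Fin (k / α), W i ≤
        η * (D * (q ^ (D - 1) * ∑ d ∈ Finset.Ico 1 q, d)) := by
      have hstep : ∑ i : Fin (k / α), W i ≤
          ∑ s ∈ Finset.Icc 1 D, ∑ g ∈ Finset.range (q ^ (D - s)),
            ∑ d ∈ Finset.Ico 1 q, η * (d * q ^ (s - 1)) := by
        rw [hW]
        rw [Finset.sum_comm]
        refine Finset.sum_le_sum fun s hs => ?_
        rw [Finset.sum_comm]
        refine Finset.sum_le_sum fun g hg => ?_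
        rw [Finset.sum_comm]
        refine Finset.sum_le_sum fun d hd => ?_
        simp only [Finset.mem_Icc] at hs
        simp only [Finset.mem_range] at hg
        simp only [Finset.mem_Ico] at hd
        have hGe := hedge s g d hs.1 hs.2 hg hd.1 hd.2
        have hcard : (Finset.univ.filter fun i : Fin (k / α) =>
            (T i).Adj (hub (g * q ^ s + d * q ^ (s - 1))) (hub (g * q ^ s))).card ≤ η := by
          have hc := hcong s((hub (g * q ^ s + d * q ^ (s - 1))), (hub (g * q ^ s)))
            ((SimpleGraph.mem_edgeSet G).mpr hGe)
          rw [Nat.card_eq_fintype_card, Fintype.card_subtype] at hc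
          calc (Finset.univ.filter fun i : Fin (k / α) =>
              (T i).Adj (hub (g * q ^ s + d * q ^ (s - 1))) (hub (g * q ^ s))).card
              = (Finset.univ.filter fun i : Fin (k / α) =>
                s((hub (g * q ^ s + d * q ^ (s - 1))), (hub (g * q ^ s))) ∈ (T i).edgeSet).card := by
                simp only [SimpleGraph.mem_edgeSet]
          _ ≤ η := hc
        calc ∑ i : Fin (k / α),
            (if (T i).Adj (hub (g * q ^ s + d * q ^ (s - 1))) (hub (g * q ^ s))
              then d * q ^ (s - 1) else 0)
            = (Finset.univ.filter fun i : Fin (k / α) =>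
                (T i).Adj (hub (g * q ^ s + d * q ^ (s - 1))) (hub (g * q ^ s))).card *
                (d * q ^ (s - 1)) := by
              rw [← Finset.sum_filter, Finset.sum_const, smul_eq_mul]
        _ ≤ η * (d * q ^ (s - 1)) := Nat.mul_le_mul_right _ hcard
      calc ∑ i : Fin (k / α), W i ≤ _ := hstep
      _ = η * (D * (q ^ (D - 1) * ∑ d ∈ Finset.Ico 1 q, d)) := by
          have hinner : ∀ s ∈ Finset.Icc 1 D,
              (∑ g ∈ Finset.range (q ^ (D - s)), ∑ d ∈ Finset.Ico 1 q, η * (d * q ^ (s - 1)))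
              = η * (q ^ (D - 1) * ∑ d ∈ Finset.Ico 1 q, d) := by
            intro s hs
            simp only [Finset.mem_Icc] at hs
            rw [show (∑ d ∈ Finset.Ico 1 q, η * (d * q ^ (s - 1)))
                = η * q ^ (s - 1) * ∑ d ∈ Finset.Ico 1 q, d by
              rw [Finset.mul_sum]; exact Finset.sum_congr rfl fun d _ => by ring]
            rw [Finset.sum_const, Finset.card_range, smul_eq_mul]
            rw [show q ^ (D - s) * (η * q ^ (s - 1) * ∑ d ∈ Finset.Ico 1 q, d)
                = η * ((q ^ (D - s) * q ^ (s - 1)) * ∑ d ∈ Finset.Ico 1 q, d) by ring]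
            rw [← pow_add, show D - s + (s - 1) = D - 1 by omega]
          rw [Finset.sum_congr rfl hinner, Finset.sum_const, Nat.card_Icc, smul_eq_mul]
          rw [show D + 1 - 1 = D by omega]
          ring
    -- numeric identity : 4 * η * TSum = (k/α) * (L - q^(D-1))
    have hLq : L = q ^ (D - 1) * q := by
      rw [hLdef]; conv_lhs => rw [show D = (D - 1) + 1 by omega, pow_succ]
    have hsub : L - q ^ (D - 1) = q ^ (D - 1) * (q - 1) := by
      have h2 : q ^ (D - 1) * (q - 1) + q ^ (D - 1) = L := by
        calc q ^ (D - 1) * (q - 1) + q ^ (D - 1) = q ^ (D - 1) * ((q - 1) + 1) := by ring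
        _ = q ^ (D - 1) * q := by rw [show q - 1 + 1 = q by omega]
        _ = L := hLq.symm
      omega
    have hS1 : ∑ d ∈ Finset.Ico 1 q, d = m * (q - 1) := by
      have h2 : q * (q - 1) = 2 * (m * (q - 1)) := by rw [hqdef]; ring
      omega
    have hfin : 4 * (η * (D * (q ^ (D - 1) * ∑ d ∈ Finset.Ico 1 q, d)))
        = (k / α) * (L - q ^ (D - 1)) := by
      rw [htα, hsub, hS1]; ring
    have hchain : (k / α) * (L - q ^ (D - 1) + 1) ≤ (k / α) * (L - q ^ (D - 1)) := by
      calc (k / α) * (L - q ^ (D - 1) + 1)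
          = Fintype.card (Fin (k / α)) * (L - q ^ (D - 1) + 1) := by rw [Fintype.card_fin]
      _ ≤ ∑ i : Fin (k / α), 4 * W i := hsum1
      _ = 4 * ∑ i : Fin (k / α), W i := by rw [Finset.mul_sum]
      _ ≤ 4 * (η * (D * (q ^ (D - 1) * ∑ d ∈ Finset.Ico 1 q, d))) :=
            Nat.mul_le_mul_left _ hsum2
      _ = (k / α) * (L - q ^ (D - 1)) := hfin
    have ht1 : 1 ≤ k / α := by
      rw [htα]
      have h4 : 0 < 4 * D * η * m := by positivity
      omega
    rw [Nat.mul_add, Nat.mul_one] at hchain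
    omega
  obtain ⟨i, hWi⟩ := hex
  have hle : T i ≤ G := (hT i).1
  have hconnT : (T i).Connected := (hT i).2.isConnected
  set Bl : ℕ → Prop := fun τ => ¬ ∃ u v : Fin n, (T i).Adj u v ∧
      SCrel q D B (u : ℕ) (v : ℕ) ∧ blkN B L (v : ℕ) ≤ τ ∧ τ < blkN B L (u : ℕ) with hBl
  have hscblk : ∀ u v : Fin n, SCrel q D B (u : ℕ) (v : ℕ) →
      ∃ s g d : ℕ, 1 ≤ s ∧ s ≤ D ∧ g < q ^ (D - s) ∧ 1 ≤ d ∧ d < q ∧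
        blkN B L (u : ℕ) = g * q ^ s + d * q ^ (s - 1) ∧ blkN B L (v : ℕ) = g * q ^ s ∧
        u = hub (g * q ^ s + d * q ^ (s - 1)) ∧ v = hub (g * q ^ s) := by
    intro u v hsc
    obtain ⟨s, g, d, hs1, hsD', hg, hd1, hdq, hu, hv⟩ := hsc
    obtain ⟨hj1, hj2⟩ := hidx s g d hs1 hsD' hg hd1 hdq
    exact ⟨s, g, d, hs1, hsD', hg, hd1, hdq,
      (by rw [hu]; exact hblk_hub _ hj1),
      (by rw [hv]; exact hblk_hub _ hj2),
      Fin.ext (by rw [hu, hubval _ hj1]),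
      Fin.ext (by rw [hv, hubval _ hj2])⟩
  have hspan_pos : ∀ s d : ℕ, 1 ≤ s → 1 ≤ d → 1 ≤ d * q ^ (s - 1) := by
    intro s d _ hd1
    calc 1 = 1 * 1 := by ring
    _ ≤ d * q ^ (s - 1) := Nat.mul_le_mul hd1 (Nat.one_le_pow _ _ (by omega))
  have walkcross : ∀ (x y : Fin n) (p : (T i).Walk x y),
      ((Finset.Ico (min (blkN B L (x : ℕ)) (blkN B L (y : ℕ)))
        (max (blkN B L (x : ℕ)) (blkN B L (y : ℕ)))).filter Bl).card ≤ p.length := by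
    intro x y p
    induction p with
    | nil => simp
    | @cons a b c h p ih =>
      have hGadj : G.Adj a b := hle h
      have hsubset : Finset.Ico (min (blkN B L (a : ℕ)) (blkN B L (c : ℕ)))
            (max (blkN B L (a : ℕ)) (blkN B L (c : ℕ))) ⊆
          Finset.Ico (min (blkN B L (a : ℕ)) (blkN B L (b : ℕ)))
            (max (blkN B L (a : ℕ)) (blkN B L (b : ℕ))) ∪
          Finset.Ico (min (blkN B L (b : ℕ)) (blkN B L (c : ℕ)))
            (max (blkN B L (b : ℕ)) (blkN B L (c : ℕ))) := by
        intro τ hτ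
        simp only [Finset.mem_Ico, Finset.mem_union] at *
        omega
      have hstep : ((Finset.Ico (min (blkN B L (a : ℕ)) (blkN B L (b : ℕ)))
          (max (blkN B L (a : ℕ)) (blkN B L (b : ℕ)))).filter Bl).card ≤ 1 := by
        rcases (GG_adj.mp hGadj).2 with hbase | hsc | hsc
        · calc ((Finset.Ico (min (blkN B L (a : ℕ)) (blkN B L (b : ℕ)))
              (max (blkN B L (a : ℕ)) (blkN B L (b : ℕ)))).filter Bl).card
              ≤ (Finset.Ico (min (blkN B L (a : ℕ)) (blkN B L (b : ℕ)))
                (max (blkN B L (a : ℕ)) (blkN B L (b : ℕ)))).card :=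
                Finset.card_filter_le _ _
          _ ≤ 1 := by rw [Nat.card_Ico]; omega
        · have hempty : ((Finset.Ico (min (blkN B L (a : ℕ)) (blkN B L (b : ℕ)))
              (max (blkN B L (a : ℕ)) (blkN B L (b : ℕ)))).filter Bl) = ∅ := by
            rw [Finset.filter_eq_empty_iff]
            intro τ hτ
            simp only [Finset.mem_Ico] at hτ
            obtain ⟨s, g, d, hs1, hsD', hg, hd1, hdq, hbu, hbv, _, _⟩ := hscblk a b hsc
            have hlt : blkN B L (b : ℕ) < blkN B L (a : ℕ) := by
              have := hspan_pos s d hs1 hd1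
              omega
            rw [hBl]
            exact not_not_intro ⟨a, b, h, hsc, by omega, by omega⟩
          rw [hempty]; simp
        · have hempty : ((Finset.Ico (min (blkN B L (a : ℕ)) (blkN B L (b : ℕ)))
              (max (blkN B L (a : ℕ)) (blkN B L (b : ℕ)))).filter Bl) = ∅ := by
            rw [Finset.filter_eq_empty_iff]
            intro τ hτ
            simp only [Finset.mem_Ico] at hτ
            obtain ⟨s, g, d, hs1, hsD', hg, hd1, hdq, hbu, hbv, _, _⟩ := hscblk b a hsc
            have hlt : blkN B L (a : ℕ) < blkN B L (b : ℕ) := by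
              have := hspan_pos s d hs1 hd1
              omega
            rw [hBl]
            exact not_not_intro ⟨b, a, h.symm, hsc, by omega, by omega⟩
          rw [hempty]; simp
      have hmono := Finset.card_le_card (Finset.filter_subset_filter Bl hsubset)
      rw [Finset.filter_union] at hmono
      calc ((Finset.Ico (min (blkN B L (a : ℕ)) (blkN B L (c : ℕ)))
            (max (blkN B L (a : ℕ)) (blkN B L (c : ℕ)))).filter Bl).card
          ≤ _ := hmono
      _ ≤ ((Finset.Ico (min (blkN B L (a : ℕ)) (blkN B L (b : ℕ)))
            (max (blkN B L (a : ℕ)) (blkN B L (b : ℕ)))).filter Bl).card +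
          ((Finset.Ico (min (blkN B L (b : ℕ)) (blkN B L (c : ℕ)))
            (max (blkN B L (b : ℕ)) (blkN B L (c : ℕ)))).filter Bl).card :=
            Finset.card_union_le _ _
      _ ≤ 1 + p.length := Nat.add_le_add hstep ih
      _ = (SimpleGraph.Walk.cons h p).length := by
            rw [SimpleGraph.Walk.length_cons]; omega
  -- unblocked thresholds are spanned by tree shortcut edges
  have hunb : ((Finset.Ico 0 (L - 1)).filter (fun τ => ¬ Bl τ)).card ≤ W i := by
    have hsub2 : (Finset.Ico 0 (L - 1)).filter (fun τ => ¬ Bl τ) ⊆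
        (Finset.Icc 1 D).biUnion fun s => (Finset.range (q ^ (D - s))).biUnion fun g =>
          (Finset.Ico 1 q).biUnion fun d =>
            if (T i).Adj (hub (g * q ^ s + d * q ^ (s - 1))) (hub (g * q ^ s))
            then Finset.Ico (g * q ^ s) (g * q ^ s + d * q ^ (s - 1)) else ∅ := by
      intro τ hτ
      simp only [Finset.mem_filter] at hτ
      obtain ⟨hτI, hnb⟩ := hτ
      rw [hBl, not_not] at hnb
      obtain ⟨u, v, hadj, hsc, hb1, hb2⟩ := hnb
      obtain ⟨s, g, d, hs1, hsD', hg, hd1, hdq, hbu, hbv, hue, hve⟩ := hscblk u v hsc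
      simp only [Finset.mem_biUnion]
      refine ⟨s, Finset.mem_Icc.mpr ⟨hs1, hsD'⟩, g, Finset.mem_range.mpr hg, d,
        Finset.mem_Ico.mpr ⟨hd1, hdq⟩, ?_⟩
      rw [if_pos (by rw [← hue, ← hve]; exact hadj)]
      rw [Finset.mem_Ico]
      omega
    calc ((Finset.Ico 0 (L - 1)).filter (fun τ => ¬ Bl τ)).card
        ≤ _ := Finset.card_le_card hsub2
    _ ≤ ∑ s ∈ Finset.Icc 1 D, ((Finset.range (q ^ (D - s))).biUnion fun g =>
          (Finset.Ico 1 q).biUnion fun d =>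
            if (T i).Adj (hub (g * q ^ s + d * q ^ (s - 1))) (hub (g * q ^ s))
            then Finset.Ico (g * q ^ s) (g * q ^ s + d * q ^ (s - 1)) else ∅).card :=
          Finset.card_biUnion_le
    _ ≤ ∑ s ∈ Finset.Icc 1 D, ∑ g ∈ Finset.range (q ^ (D - s)),
          ((Finset.Ico 1 q).biUnion fun d =>
            if (T i).Adj (hub (g * q ^ s + d * q ^ (s - 1))) (hub (g * q ^ s))
            then Finset.Ico (g * q ^ s) (g * q ^ s + d * q ^ (s - 1)) else ∅).card :=
          Finset.sum_le_sum fun s _ => Finset.card_biUnion_le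
    _ ≤ ∑ s ∈ Finset.Icc 1 D, ∑ g ∈ Finset.range (q ^ (D - s)), ∑ d ∈ Finset.Ico 1 q,
          (if (T i).Adj (hub (g * q ^ s + d * q ^ (s - 1))) (hub (g * q ^ s))
            then Finset.Ico (g * q ^ s) (g * q ^ s + d * q ^ (s - 1)) else ∅).card :=
          Finset.sum_le_sum fun s _ => Finset.sum_le_sum fun g _ => Finset.card_biUnion_le
    _ = W i := by
        rw [hW]
        refine Finset.sum_congr rfl fun s _ => Finset.sum_congr rfl fun g _ =>
          Finset.sum_congr rfl fun d _ => ?_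
        split
        · rw [Nat.card_Ico]; omega
        · simp
  -- endpoints
  have hv0lt : n - 1 < n := by omega
  have hbu0 : blkN B L (((⟨0, h0n⟩ : Fin n)) : ℕ) = 0 := hblk0
  have hbv0 : blkN B L (((⟨n - 1, hv0lt⟩ : Fin n)) : ℕ) = L - 1 := by
    have h1 : L - 1 ≤ (n - 1) / B := by
      rw [Nat.le_div_iff_mul_le (by omega : 0 < B)]
      have h2 : (L - 1) * B + B = L * B := by
        calc (L - 1) * B + B = ((L - 1) + 1) * B := by ring
        _ = L * B := by rw [show L - 1 + 1 = L by omega]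
      omega
    show min ((n - 1) / B) (L - 1) = L - 1
    exact min_eq_right h1
  obtain ⟨p, hp⟩ := hconnT.exists_walk_length_eq_dist ⟨0, h0n⟩ ⟨n - 1, hv0lt⟩
  have hcross := walkcross _ _ p
  rw [hp, hbu0, hbv0] at hcross
  rw [show min 0 (L - 1) = 0 by omega, show max 0 (L - 1) = L - 1 by omega] at hcross
  have hpartle : L - 1 ≤ ((Finset.Ico 0 (L - 1)).filter Bl).card +
      ((Finset.Ico 0 (L - 1)).filter (fun τ => ¬ Bl τ)).card := by
    have := Finset.card_filter_add_card_filter_not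
      (s := Finset.Ico 0 (L - 1)) (p := Bl)
    rw [Nat.card_Ico] at this
    omega
  refine ⟨i, ⟨0, h0n⟩, ⟨n - 1, hv0lt⟩, ?_⟩
  rw [hq]
  have hP1 : 1 ≤ q ^ (D - 1) := Nat.one_le_pow _ _ (by omega)
  have hL2P : 2 * q ^ (D - 1) ≤ L := by
    have h3 : q ^ (D - 1) * 2 ≤ q ^ (D - 1) * q := Nat.mul_le_mul_left _ hq2
    have hLq : L = q ^ (D - 1) * q := by
      rw [hLdef]; conv_lhs => rw [show D = (D - 1) + 1 by omega, pow_succ]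
    omega
  have hnum : q ^ D ≤ 4 * (T i).dist ⟨0, h0n⟩ ⟨n - 1, hv0lt⟩ := by omega
  rw [div_le_iff₀ (by norm_num : (0 : ℝ) < 4)]
  calc ((q : ℕ) : ℝ) ^ D = ((q ^ D : ℕ) : ℝ) := by push_cast; ring
  _ ≤ ((4 * (T i).dist ⟨0, h0n⟩ ⟨n - 1, hv0lt⟩ : ℕ) : ℝ) := by exact_mod_cast hnum
  _ = ((T i).dist ⟨0, h0n⟩ ⟨n - 1, hv0lt⟩ : ℝ) * 4 := by push_cast; ring
end

section
/- Let n, D be positive integers and let p be a real number with 0 < p < 1. Let V be a finite vertex set with |V| ≤ n, let H be a connected simple graph with vertex set V, and let T be a tree on V (a connected acyclic simple graph with vertex set V) having a root r such that every vertex of V is within T-distance D of r. Let R be the random spanning subgraph of T in which each edge of T is retained independently with probability p. Then, with probability at least 1 − D/n^{48}, the graph H ∪ R (the graph on V whose edge set is E(H) ∪ E(R)) has diameter at most (101·ln n / p)^D. -/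
open Finset

variable {α : Type*} [DecidableEq α]

lemma binom_sum (A : Finset α) (x y : ℝ) :
    ∑ S ∈ A.powerset, x ^ S.card * y ^ (A.card - S.card) = (x + y) ^ A.card := by
  have h := Finset.prod_add (fun _ => x) (fun _ => y) A
  rw [Finset.prod_const] at h
  rw [h]
  refine Finset.sum_congr rfl fun t ht => ?_
  rw [Finset.prod_const, Finset.prod_const, Finset.card_sdiff_of_subset (Finset.mem_powerset.mp ht)]

lemma powerset_split (A B : Finset α) (hAB : Disjoint A B) (f : Finset α → ℝ) :
    ∑ S ∈ (A ∪ B).powerset, f S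
      = ∑ S₁ ∈ A.powerset, ∑ S₂ ∈ B.powerset, f (S₁ ∪ S₂) := by
  classical
  induction A using Finset.induction_on generalizing f with
  | empty => simp
  | @insert a A ha ih =>
      have haB : a ∉ A ∪ B := by
        simp only [Finset.mem_union, not_or]
        exact ⟨ha, Finset.disjoint_left.mp hAB (Finset.mem_insert_self a A)⟩
      have hAB' : Disjoint A B := hAB.mono_left (Finset.subset_insert a A)
      rw [Finset.insert_union, Finset.sum_powerset_insert haB,
        Finset.sum_powerset_insert ha, ih hAB' f, ih hAB' (fun S => f (insert a S))]
      congr 1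
      refine Finset.sum_congr rfl fun S₁ _ => Finset.sum_congr rfl fun S₂ hS₂ => ?_
      rw [Finset.insert_union]

lemma avoid_sum (B F : Finset α) (hF : F ⊆ B) (p : ℝ) :
    ∑ S ∈ B.powerset, (if Disjoint F S then p ^ S.card * (1 - p) ^ (B.card - S.card) else 0)
      = (1 - p) ^ F.card := by
  classical
  have hBcard : B.card = F.card + (B \ F).card := by
    have := Finset.card_le_card hF
    rw [Finset.card_sdiff_of_subset hF]
    omega
  have hsplit := powerset_split F (B \ F) Finset.disjoint_sdiff
      (fun S => if Disjoint F S then p ^ S.card * (1 - p) ^ (B.card - S.card) else 0)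
  rw [Finset.union_sdiff_of_subset hF] at hsplit
  rw [hsplit]
  rw [Finset.sum_eq_single_of_mem (∅ : Finset α) (Finset.empty_mem_powerset F) ?side]
  · have : ∀ S₂ ∈ (B \ F).powerset,
        (if Disjoint F ((∅ : Finset α) ∪ S₂) then
          p ^ ((∅ : Finset α) ∪ S₂).card * (1 - p) ^ (B.card - ((∅ : Finset α) ∪ S₂).card) else 0)
        = (1 - p) ^ F.card * (p ^ S₂.card * (1 - p) ^ ((B \ F).card - S₂.card)) := by
      intro S₂ hS₂
      have hS₂' := Finset.mem_powerset.mp hS₂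
      have hdisj : Disjoint F S₂ := Finset.disjoint_sdiff.mono_right hS₂'
      rw [Finset.empty_union, if_pos hdisj]
      have hc : B.card - S₂.card = F.card + ((B \ F).card - S₂.card) := by
        have := Finset.card_le_card hS₂'
        omega
      rw [hc, pow_add]
      ring
    rw [Finset.sum_congr rfl this, ← Finset.mul_sum, binom_sum]
    have : p + (1 - p) = 1 := by ring
    rw [this, one_pow, mul_one]
  case side =>
    intro S₁ hS₁ hne
    refine Finset.sum_eq_zero fun S₂ _ => ?_
    rw [if_neg]
    intro hdisj
    obtain ⟨a, ha⟩ := Finset.nonempty_iff_ne_empty.mpr hne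
    exact (Finset.disjoint_left.mp hdisj (Finset.mem_powerset.mp hS₁ ha))
      (Finset.mem_union_left _ ha)

lemma prob_bound (A A₁ : Finset α) (hA₁ : A₁ ⊆ A) (p : ℝ) (hp0 : 0 ≤ p) (hp1 : p ≤ 1)
    (s : ℕ) (F : Finset α → Finset α)
    (hFsub : ∀ S₁, F S₁ ⊆ A \ A₁)
    (Q : Finset α → Prop) [DecidablePred Q]
    (hQ : ∀ S ∈ A.powerset, Q S → s ≤ (F (S ∩ A₁)).card ∧ Disjoint (F (S ∩ A₁)) S) :
    ∑ S ∈ A.powerset.filter Q, p ^ S.card * (1 - p) ^ (A.card - S.card) ≤ (1 - p) ^ s := by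
  classical
  have hq : (0 : ℝ) ≤ 1 - p := by linarith
  have hμ : ∀ S : Finset α, 0 ≤ p ^ S.card * (1 - p) ^ (A.card - S.card) :=
    fun S => mul_nonneg (pow_nonneg hp0 _) (pow_nonneg hq _)
  set R : Finset α → Prop :=
    fun S => s ≤ (F (S ∩ A₁)).card ∧ Disjoint (F (S ∩ A₁)) S with hR
  have step1 : ∑ S ∈ A.powerset.filter Q, p ^ S.card * (1 - p) ^ (A.card - S.card)
      ≤ ∑ S ∈ A.powerset,
          (if R S then p ^ S.card * (1 - p) ^ (A.card - S.card) else 0) := by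
    rw [Finset.sum_filter]
    refine Finset.sum_le_sum fun S hS => ?_
    by_cases h : Q S
    · rw [if_pos h, if_pos (hQ S hS h)]
    · rw [if_neg h]
      split
      · exact hμ S
      · exact le_rfl
  refine step1.trans ?_
  have hunion : A₁ ∪ (A \ A₁) = A := Finset.union_sdiff_of_subset hA₁
  have hsplit := powerset_split A₁ (A \ A₁) Finset.disjoint_sdiff
      (fun S => if R S then p ^ S.card * (1 - p) ^ (A.card - S.card) else 0)
  rw [hunion] at hsplit
  rw [hsplit]
  have key : ∀ S₁ ∈ A₁.powerset,
      (∑ S₂ ∈ (A \ A₁).powerset,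
        (if R (S₁ ∪ S₂) then
          p ^ (S₁ ∪ S₂).card * (1 - p) ^ (A.card - (S₁ ∪ S₂).card) else 0))
      ≤ (p ^ S₁.card * (1 - p) ^ (A₁.card - S₁.card)) * (1 - p) ^ s := by
    intro S₁ hS₁
    have hS₁' : S₁ ⊆ A₁ := Finset.mem_powerset.mp hS₁
    have hdisjF : Disjoint (F S₁) S₁ :=
      Finset.sdiff_disjoint.mono (hFsub S₁) hS₁'
    have hterm : ∀ S₂ ∈ (A \ A₁).powerset,
        (if R (S₁ ∪ S₂) then
          p ^ (S₁ ∪ S₂).card * (1 - p) ^ (A.card - (S₁ ∪ S₂).card) else 0)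
        = (if s ≤ (F S₁).card then 1 else 0) *
          ((p ^ S₁.card * (1 - p) ^ (A₁.card - S₁.card)) *
            (if Disjoint (F S₁) S₂ then
              p ^ S₂.card * (1 - p) ^ ((A \ A₁).card - S₂.card) else 0)) := by
      intro S₂ hS₂
      have hS₂' : S₂ ⊆ A \ A₁ := Finset.mem_powerset.mp hS₂
      have hdisj12 : Disjoint S₁ S₂ :=
        Finset.disjoint_sdiff.mono hS₁' hS₂'
      have hcap : (S₁ ∪ S₂) ∩ A₁ = S₁ := by
        have h2 : ∀ a ∈ S₂, a ∉ A₁ := fun a ha => (Finset.mem_sdiff.mp (hS₂' ha)).2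
        ext a
        simp only [Finset.mem_inter, Finset.mem_union]
        constructor
        · rintro ⟨h | h, hA⟩
          · exact h
          · exact absurd hA (h2 a h)
        · intro h
          exact ⟨Or.inl h, hS₁' h⟩
      have hRiff : R (S₁ ∪ S₂) ↔ (s ≤ (F S₁).card ∧ Disjoint (F S₁) S₂) := by
        rw [hR]
        simp only [hcap, Finset.disjoint_union_right]
        tauto
      have hcardu : (S₁ ∪ S₂).card = S₁.card + S₂.card :=
        Finset.card_union_of_disjoint hdisj12
      have hApart : A.card - (S₁ ∪ S₂).card
          = (A₁.card - S₁.card) + ((A \ A₁).card - S₂.card) := by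
        have h1 : S₁.card ≤ A₁.card := Finset.card_le_card hS₁'
        have h2 : S₂.card ≤ (A \ A₁).card := Finset.card_le_card hS₂'
        have h3 : A.card = A₁.card + (A \ A₁).card := by
          have := Finset.card_le_card hA₁
          rw [Finset.card_sdiff_of_subset hA₁]; omega
        omega
      by_cases hs : s ≤ (F S₁).card
      · by_cases hd : Disjoint (F S₁) S₂
        · rw [if_pos (hRiff.mpr ⟨hs, hd⟩), if_pos hs, if_pos hd, hApart, hcardu,
            pow_add, pow_add]
          ring
        · rw [if_neg (fun h => hd (hRiff.mp h).2), if_neg hd]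
          simp
      · rw [if_neg (fun h => hs (hRiff.mp h).1), if_neg hs]
        simp
    rw [Finset.sum_congr rfl hterm, ← Finset.mul_sum, ← Finset.mul_sum,
      avoid_sum (A \ A₁) (F S₁) (hFsub S₁) p]
    by_cases hs : s ≤ (F S₁).card
    · rw [if_pos hs, one_mul]
      exact mul_le_mul_of_nonneg_left
        (pow_le_pow_of_le_one hq (by linarith) hs)
        (mul_nonneg (pow_nonneg hp0 _) (pow_nonneg hq _))
    · rw [if_neg hs, zero_mul]
      exact mul_nonneg (mul_nonneg (pow_nonneg hp0 _) (pow_nonneg hq _))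
        (pow_nonneg hq _)
  calc ∑ S₁ ∈ A₁.powerset, ∑ S₂ ∈ (A \ A₁).powerset,
        (if R (S₁ ∪ S₂) then
          p ^ (S₁ ∪ S₂).card * (1 - p) ^ (A.card - (S₁ ∪ S₂).card) else 0)
      ≤ ∑ S₁ ∈ A₁.powerset,
          (p ^ S₁.card * (1 - p) ^ (A₁.card - S₁.card)) * (1 - p) ^ s :=
        Finset.sum_le_sum key
    _ = (1 - p) ^ s := by
        rw [← Finset.sum_mul, binom_sum]
        have : p + (1 - p) = 1 := by ring
        rw [this, one_pow, one_mul]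

section GraphLemmas

open SimpleGraph

variable {V : Type} (G : SimpleGraph V)

lemma dist_succ_exists (hG : G.Connected) (u v : V) (h : G.dist u v ≠ 0) :
    ∃ y, G.Adj u y ∧ G.dist y v + 1 = G.dist u v := by
  obtain ⟨w, hw⟩ := (hG u v).exists_walk_length_eq_dist
  cases w with
  | nil => rw [← hw] at h; simp at h
  | @cons _ y _ hadj q =>
      refine ⟨y, hadj, ?_⟩
      have h1 : G.dist y v ≤ q.length := SimpleGraph.dist_le q
      have h2 : G.dist u v ≤ G.dist u y + G.dist y v := hG.dist_triangle
      have h3 : G.dist u y ≤ 1 := by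
        have := SimpleGraph.dist_le (SimpleGraph.Walk.cons hadj SimpleGraph.Walk.nil)
        simpa using this
      have h4 : q.length + 1 = G.dist u v := by
        rw [← hw]; simp [SimpleGraph.Walk.length_cons]
      omega

lemma exists_dist_eq' (hG : G.Connected) (u v : V) (t : ℕ) (ht : t ≤ G.dist u v) :
    ∃ y, G.dist u y = t ∧ G.dist u y + G.dist y v = G.dist u v := by
  induction t with
  | zero => exact ⟨u, SimpleGraph.dist_self, by simp [SimpleGraph.dist_self]⟩
  | succ t ih =>
      obtain ⟨y, h1, h2⟩ := ih (by omega)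
      have hyv : G.dist y v ≠ 0 := by omega
      obtain ⟨z, hadj, h3⟩ := dist_succ_exists G hG y v hyv
      have h4 : G.dist u z ≤ G.dist u y + 1 := by
        have h5 : G.dist u z ≤ G.dist u y + G.dist y z := hG.dist_triangle
        have h6 : G.dist y z ≤ 1 := by
          have := SimpleGraph.dist_le (SimpleGraph.Walk.cons hadj SimpleGraph.Walk.nil)
          simpa using this
        omega
      have h7 : G.dist u v ≤ G.dist u z + G.dist z v := hG.dist_triangle
      exact ⟨z, by omega, by omega⟩

lemma graph_exists_dist_eq (hG : G.Connected) (u v : V) (t : ℕ) (ht : t ≤ G.dist u v) :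
    ∃ y, G.dist u y = t := by
  obtain ⟨y, h1, _⟩ := exists_dist_eq' G hG u v t ht
  exact ⟨y, h1⟩

lemma collect [Fintype V] [DecidableEq V] (hG : G.Connected)
    (φ : V → ℕ) (d s ρ : ℕ) (hd : 1 ≤ d)
    (hcover : ∀ y : V, ∃ z, φ z ≤ d ∧ G.dist y z ≤ ρ)
    (z₀ : V) (hz₀ : φ z₀ = 0) (u : V) :
    (∃ z, φ z ≤ d - 1 ∧ G.dist u z ≤ s * (2 * ρ + 1)) ∨
      s ≤ (Finset.univ.filter
            fun w => φ w = d ∧ G.dist u w ≤ s * (2 * ρ + 1)).card := by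
  classical
  by_cases hbig : ∀ i : Fin s, ∃ y, G.dist u y = (i.1 + 1) * (2 * ρ + 1) - ρ
  · choose y hy using hbig
    have hz : ∀ i : Fin s, ∃ z, φ z ≤ d ∧ G.dist (y i) z ≤ ρ := fun i => hcover (y i)
    choose z hz1 hz2 using hz
    have hub : ∀ i : Fin s, G.dist u (z i) ≤ (i.1 + 1) * (2 * ρ + 1) := by
      intro i
      have h1 : G.dist u (z i) ≤ G.dist u (y i) + G.dist (y i) (z i) := hG.dist_triangle
      have h2 := hy i
      have h3 := hz2 i
      have h4 : ρ ≤ (i.1 + 1) * (2 * ρ + 1) := by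
        have : 2 * ρ + 1 ≤ (i.1 + 1) * (2 * ρ + 1) := Nat.le_mul_of_pos_left _ (by omega)
        omega
      omega
    have hlb : ∀ i : Fin s, (i.1 + 1) * (2 * ρ + 1) - 2 * ρ ≤ G.dist u (z i) := by
      intro i
      have h1 : G.dist u (y i) ≤ G.dist u (z i) + G.dist (z i) (y i) := hG.dist_triangle
      have h2 := hy i
      have h3 : G.dist (z i) (y i) ≤ ρ := by rw [SimpleGraph.dist_comm]; exact hz2 i
      omega
    by_cases hlow : ∃ i : Fin s, φ (z i) ≤ d - 1
    · obtain ⟨i, hi⟩ := hlow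
      left
      refine ⟨z i, hi, (hub i).trans ?_⟩
      exact Nat.mul_le_mul_right _ i.2
    · push_neg at hlow
      have hzd : ∀ i : Fin s, φ (z i) = d := by
        intro i
        have := hlow i
        have := hz1 i
        omega
      right
      have hcard : ((Finset.univ : Finset (Fin s))).card = s := by
        simp
      refine le_trans (le_of_eq hcard.symm) (Finset.card_le_card_of_injOn z ?_ ?_)
      · intro i _
        refine Finset.mem_filter.mpr ⟨Finset.mem_univ _, hzd i, (hub i).trans ?_⟩
        exact Nat.mul_le_mul_right _ i.2
      · intro i _ j _ hij
        by_contra hne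
        have key : ∀ a b : Fin s, a.1 < b.1 → z a ≠ z b := by
          intro a b hab heq
          have h1 := hub a
          have h2 := hlb b
          rw [heq] at h1
          have hmul : (a.1 + 1 + 1) * (2 * ρ + 1) ≤ (b.1 + 1) * (2 * ρ + 1) :=
            Nat.mul_le_mul_right _ (by omega)
          have hexp : (a.1 + 1 + 1) * (2 * ρ + 1)
              = (a.1 + 1) * (2 * ρ + 1) + (2 * ρ + 1) := by ring
          omega
        rcases Nat.lt_trichotomy i.1 j.1 with h | h | h
        · exact key i j h hij
        · exact hne (Fin.ext h)
        · exact key j i h hij.symm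
  · push_neg at hbig
    obtain ⟨i, hi⟩ := hbig
    left
    refine ⟨z₀, by omega, ?_⟩
    have hall : G.dist u z₀ < (i.1 + 1) * (2 * ρ + 1) - ρ := by
      by_contra hge
      push_neg at hge
      obtain ⟨y, hy⟩ := graph_exists_dist_eq G hG u z₀ _ hge
      exact hi y hy
    have hmul : (i.1 + 1) * (2 * ρ + 1) ≤ s * (2 * ρ + 1) := Nat.mul_le_mul_right _ i.2
    omega

end GraphLemmas

open scoped Classical

section Det

open SimpleGraph

variable {V : Type} [Fintype V] [DecidableEq V]

def sigmaF (s : ℕ) : ℕ → ℕ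
  | 0 => 0
  | j + 1 => (2 * s + 1) * sigmaF s j + s + 1

noncomputable def loweF (T : SimpleGraph V) (r : V) : Sym2 V → ℕ :=
  Sym2.lift ⟨fun a b => min (T.dist r a) (T.dist r b), fun a b => by
    simp [min_comm]⟩

noncomputable def Gd (H T : SimpleGraph V) (r : V) (S : Finset (Sym2 V)) (k : ℕ) :
    SimpleGraph V :=
  H ⊔ SimpleGraph.fromEdgeSet ↑(S.filter fun e => k ≤ loweF T r e)

noncomputable def Wset (H T : SimpleGraph V) (r : V) (s : ℕ) (S : Finset (Sym2 V))
    (d ρ : ℕ) (u : V) : Finset V :=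
  Finset.univ.filter fun w => T.dist r w = d ∧
    (Gd H T r S d).dist u w ≤ s * (2 * ρ + 1)

lemma Gd_mono (H T : SimpleGraph V) (r : V) (S : Finset (Sym2 V)) {k k' : ℕ}
    (h : k ≤ k') : Gd H T r S k' ≤ Gd H T r S k := by
  refine sup_le_sup_left ?_ H
  apply SimpleGraph.fromEdgeSet_mono
  intro e he
  simp only [Finset.coe_filter, Set.mem_setOf_eq] at he ⊢
  exact ⟨he.1, le_trans h he.2⟩

lemma Gd_connected (H T : SimpleGraph V) (r : V) (S : Finset (Sym2 V)) (k : ℕ)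
    (hH : H.Connected) : (Gd H T r S k).Connected :=
  hH.mono le_sup_left

lemma det_lemma (H T : SimpleGraph V) (hH : H.Connected) (hT : T.Connected) (r : V)
    (D s : ℕ) (hdepth : ∀ v, T.dist r v ≤ D)
    (par : V → V)
    (hpar : ∀ w, 1 ≤ T.dist r w → T.Adj w (par w) ∧ T.dist r (par w) + 1 = T.dist r w)
    (S : Finset (Sym2 V))
    (hgood : ∀ d, 1 ≤ d → d ≤ D → ∀ u : V,
      s ≤ (Wset H T r s S d (sigmaF s (D - d)) u).card →
      ∃ w ∈ Wset H T r s S d (sigmaF s (D - d)) u, s(w, par w) ∈ S) :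
    ∀ u v : V, (H ⊔ SimpleGraph.fromEdgeSet ↑S).dist u v ≤ 2 * sigmaF s D := by
  have hconn : ∀ k, (Gd H T r S k).Connected := fun k => Gd_connected H T r S k hH
  have claim : ∀ j, j ≤ D → ∀ y : V, ∃ z : V,
      T.dist r z ≤ D - j ∧ (Gd H T r S (D - j)).dist y z ≤ sigmaF s j := by
    intro j
    induction j with
    | zero =>
        intro _ y
        exact ⟨y, by simpa using hdepth y, by simp [SimpleGraph.dist_self, sigmaF]⟩
    | succ j ih =>
        intro hjD y
        have hj : j ≤ D := by omega
        set d := D - j with hdd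
        have hd1 : 1 ≤ d := by omega
        have hcover : ∀ x : V, ∃ z, T.dist r z ≤ d ∧
            (Gd H T r S d).dist x z ≤ sigmaF s j := ih hj
        have hroot : T.dist r r = 0 := SimpleGraph.dist_self
        rcases collect (Gd H T r S d) (hconn d) (T.dist r) d s (sigmaF s j) hd1
            hcover r hroot y with hleft | hright
        · obtain ⟨z, hz1, hz2⟩ := hleft
          refine ⟨z, by omega, ?_⟩
          have hle : (Gd H T r S (D - (j+1))).dist y z ≤ (Gd H T r S d).dist y z := by
            refine SimpleGraph.Reachable.dist_anti (Gd_mono H T r S (by omega)) ?_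
            exact (hconn d).preconnected y z
          have hsig : s * (2 * sigmaF s j + 1) ≤ sigmaF s (j + 1) := by
            have h1 : s * (2 * sigmaF s j + 1) = 2 * (s * sigmaF s j) + s := by ring
            have h2 : sigmaF s (j + 1) = 2 * (s * sigmaF s j) + sigmaF s j + s + 1 := by
              show (2 * s + 1) * sigmaF s j + s + 1 = _
              ring
            omega
          omega
        · have hW : s ≤ (Wset H T r s S d (sigmaF s (D - d)) y).card := by
            have hDd : D - d = j := by omega
            rw [hDd]
            exact hright
          obtain ⟨w, hwW, hwS⟩ := hgood d hd1 (by omega) y hW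
          have hDd : D - d = j := by omega
          rw [hDd] at hwW
          simp only [Wset, Finset.mem_filter] at hwW
          obtain ⟨-, hwd, hwdist⟩ := hwW
          have hw1 : 1 ≤ T.dist r w := by omega
          obtain ⟨hadj, hpdist⟩ := hpar w hw1
          have hne : w ≠ par w := by
            intro h
            rw [← h] at hpdist
            omega
          have hlow : loweF T r s(w, par w) = d - 1 := by
            show min (T.dist r w) (T.dist r (par w)) = d - 1
            omega
          have hadj' : (Gd H T r S (d - 1)).Adj w (par w) := by
            simp only [Gd, SimpleGraph.sup_adj, SimpleGraph.fromEdgeSet_adj,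
              Finset.coe_filter, Set.mem_setOf_eq]
            right
            exact ⟨⟨hwS, by omega⟩, hne⟩
          have hd1' : d - 1 = D - (j + 1) := by omega
          have hle : (Gd H T r S (d - 1)).dist y w ≤ (Gd H T r S d).dist y w := by
            refine SimpleGraph.Reachable.dist_anti (Gd_mono H T r S (by omega)) ?_
            exact (hconn d).preconnected y w
          have htri : (Gd H T r S (d - 1)).dist y (par w)
              ≤ (Gd H T r S (d - 1)).dist y w + (Gd H T r S (d - 1)).dist w (par w) :=
            (hconn (d - 1)).dist_triangle
          have hone : (Gd H T r S (d - 1)).dist w (par w) ≤ 1 := by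
            have := SimpleGraph.dist_le (SimpleGraph.Walk.cons hadj' SimpleGraph.Walk.nil)
            simpa using this
          refine ⟨par w, ?_, ?_⟩
          · omega
          · rw [← hd1']
            have hsig : s * (2 * sigmaF s j + 1) + 1 ≤ sigmaF s (j + 1) := by
              have h1 : s * (2 * sigmaF s j + 1) = 2 * (s * sigmaF s j) + s := by ring
              have h2 : sigmaF s (j + 1) = 2 * (s * sigmaF s j) + sigmaF s j + s + 1 := by
                show (2 * s + 1) * sigmaF s j + s + 1 = _
                ring
              omega
            omega
  intro u v
  have hfin : ∀ x : V, (H ⊔ SimpleGraph.fromEdgeSet ↑S).dist x r ≤ sigmaF s D := by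
    intro x
    obtain ⟨z, hz1, hz2⟩ := claim D le_rfl x
    have hz0 : T.dist r z = 0 := by omega
    have hzr : z = r := (((hT r z).dist_eq_zero_iff).mp hz0).symm
    rw [hzr] at hz2
    have hle : (H ⊔ SimpleGraph.fromEdgeSet ↑S).dist x r ≤ (Gd H T r S (D - D)).dist x r := by
      refine SimpleGraph.Reachable.dist_anti ?_ ((hconn _).preconnected x r)
      refine sup_le_sup_left ?_ H
      apply SimpleGraph.fromEdgeSet_mono
      intro e he
      simp only [Finset.coe_filter, Set.mem_setOf_eq] at he
      simpa using he.1
    omega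
  have hc : (H ⊔ SimpleGraph.fromEdgeSet ↑S).Connected := hH.mono le_sup_left
  have htri : (H ⊔ SimpleGraph.fromEdgeSet ↑S).dist u v
      ≤ (H ⊔ SimpleGraph.fromEdgeSet ↑S).dist u r
        + (H ⊔ SimpleGraph.fromEdgeSet ↑S).dist r v := hc.dist_triangle
  have h2 : (H ⊔ SimpleGraph.fromEdgeSet ↑S).dist r v
      = (H ⊔ SimpleGraph.fromEdgeSet ↑S).dist v r := SimpleGraph.dist_comm
  have := hfin u
  have := hfin v
  omega

end Det

lemma sigma_identity (s : ℕ) : ∀ j, 2 * s * sigmaF s j + (s + 1) = (s + 1) * (2 * s + 1) ^ j := by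
  intro j
  induction j with
  | zero => simp [sigmaF]
  | succ j ih =>
      have h : sigmaF s (j + 1) = (2 * s + 1) * sigmaF s j + s + 1 := rfl
      rw [h, pow_succ]
      nlinarith [ih]

lemma N1 (s D : ℕ) (L : ℝ) (hL : 3 ≤ L) (hD : 1 ≤ D)
    (hs147 : 147 ≤ s) (hsle : (s : ℝ) ≤ 49 * L + 1) :
    (2 * sigmaF s D : ℝ) ≤ (101 * L) ^ D := by
  have hid := sigma_identity s D
  have hsR : (147 : ℝ) ≤ (s : ℝ) := by exact_mod_cast hs147
  have hidR : 2 * (s : ℝ) * (sigmaF s D : ℝ) + ((s : ℝ) + 1)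
      = ((s : ℝ) + 1) * (2 * (s : ℝ) + 1) ^ D := by exact_mod_cast hid
  have hbase : (0 : ℝ) ≤ 2 * (s : ℝ) + 1 := by linarith
  have h99 : 2 * (s : ℝ) + 1 ≤ 99 * L := by linarith
  have hpow : (2 * (s : ℝ) + 1) ^ D ≤ (99 * L) ^ D := pow_le_pow_left₀ hbase h99 D
  have hstep1 : (2 * sigmaF s D : ℝ) * (s : ℝ) ≤ ((s : ℝ) + 1) * (2 * (s : ℝ) + 1) ^ D := by
    push_cast
    nlinarith [hidR]
  have hs1 : ((s : ℝ) + 1) ≤ (148 / 147) * (s : ℝ) := by linarith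
  have hfin1 : (2 * sigmaF s D : ℝ) * (s : ℝ) ≤ (148 / 147) * (s : ℝ) * (99 * L) ^ D := by
    calc (2 * sigmaF s D : ℝ) * (s : ℝ)
        ≤ ((s : ℝ) + 1) * (2 * (s : ℝ) + 1) ^ D := hstep1
      _ ≤ ((s : ℝ) + 1) * (99 * L) ^ D := by
          apply mul_le_mul_of_nonneg_left hpow (by linarith)
      _ ≤ (148 / 147) * (s : ℝ) * (99 * L) ^ D := by
          apply mul_le_mul_of_nonneg_right hs1 (pow_nonneg (by linarith) D)
  have hspos : (0 : ℝ) < (s : ℝ) := by linarith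
  have hmain : (2 * sigmaF s D : ℝ) ≤ (148 / 147) * (99 * L) ^ D := by
    nlinarith [hfin1]
  refine hmain.trans ?_
  have hsplit : (101 * L) ^ D = (101 / 99) ^ D * (99 * L) ^ D := by
    rw [← mul_pow]
    congr 1
    ring
  rw [hsplit]
  have h1 : (101 / 99 : ℝ) ≤ (101 / 99) ^ D := le_self_pow₀ (by norm_num) (by omega)
  have h2 : (0 : ℝ) ≤ (99 * L) ^ D := pow_nonneg (by linarith) D
  nlinarith

lemma N2 (n s : ℕ) (p : ℝ) (hp0 : 0 < p) (hp1 : p < 1) (hn : 1 ≤ n)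
    (hps : 49 * Real.log n ≤ p * s) :
    (1 - p) ^ s ≤ 1 / (n : ℝ) ^ 49 := by
  have h1 : (1 - p) ≤ Real.exp (-p) := by
    have := Real.add_one_le_exp (-p)
    linarith
  have h2 : (1 - p) ^ s ≤ Real.exp (-p) ^ s :=
    pow_le_pow_left₀ (by linarith) h1 s
  have h3 : Real.exp (-p) ^ s = Real.exp (-(p * s)) := by
    rw [← Real.exp_nat_mul]
    ring_nf
  have h4 : Real.exp (-(p * s)) ≤ Real.exp (-(49 * Real.log n)) := by
    apply Real.exp_le_exp.mpr
    linarith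
  have hn0 : (0 : ℝ) < n := by exact_mod_cast hn
  have h5 : Real.exp (-(49 * Real.log n)) = 1 / (n : ℝ) ^ 49 := by
    have h49 : (49 : ℝ) * Real.log n = ((49 : ℕ) : ℝ) * Real.log n := by norm_num
    rw [Real.exp_neg, h49, Real.exp_nat_mul, Real.exp_log hn0, one_div]
  calc (1 - p) ^ s ≤ Real.exp (-p) ^ s := h2
    _ = Real.exp (-(p * s)) := h3
    _ ≤ Real.exp (-(49 * Real.log n)) := h4
    _ = 1 / (n : ℝ) ^ 49 := h5

lemma union_bound {β ι : Type*} (P : Finset β) (μ : β → ℝ) (hμ : ∀ x, 0 ≤ μ x)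
    (I : Finset ι) (R : β → Prop) [DecidablePred R] (Q : ι → β → Prop)
    [∀ i, DecidablePred (Q i)]
    (h : ∀ x ∈ P, R x → ∃ i ∈ I, Q i x) :
    ∑ x ∈ P.filter R, μ x ≤ ∑ i ∈ I, ∑ x ∈ P.filter (Q i), μ x := by
  classical
  calc ∑ x ∈ P.filter R, μ x
      ≤ ∑ x ∈ P.filter R, ∑ i ∈ I, (if Q i x then μ x else 0) := by
        refine Finset.sum_le_sum fun x hx => ?_
        obtain ⟨hxP, hxR⟩ := Finset.mem_filter.mp hx
        obtain ⟨i, hiI, hQi⟩ := h x hxP hxR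
        have heq : (if Q i x then μ x else 0) = μ x := if_pos hQi
        have hle : (if Q i x then μ x else 0)
            ≤ ∑ i ∈ I, (if Q i x then μ x else 0) := by
          refine Finset.single_le_sum (f := fun j => if Q j x then μ x else 0)
            (fun j _ => by split <;> [exact hμ x; exact le_rfl]) hiI
        rw [heq] at hle
        exact hle
    _ = ∑ i ∈ I, ∑ x ∈ P.filter R, (if Q i x then μ x else 0) := Finset.sum_comm
    _ ≤ ∑ i ∈ I, ∑ x ∈ P.filter (Q i), μ x := by
        refine Finset.sum_le_sum fun i _ => ?_
        rw [← Finset.sum_filter]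
        refine Finset.sum_le_sum_of_subset_of_nonneg ?_ (fun x _ _ => hμ x)
        intro x hx
        rw [Finset.mem_filter] at hx ⊢
        exact ⟨(Finset.mem_filter.mp hx.1).1, hx.2⟩

lemma dist_lt_card {V : Type} [Fintype V] (G : SimpleGraph V) (hG : G.Connected)
    (u v : V) : G.dist u v < Fintype.card V := by
  obtain ⟨w, hw1, hw2⟩ := (hG u v).exists_path_of_dist
  rw [← hw2]
  exact hw1.length_lt

set_option maxHeartbeats 1000000 in
theorem stmt_6 (n D : ℕ) (hn : 0 < n) (hD : 0 < D)
    (p : ℝ) (hp0 : 0 < p) (hp1 : p < 1)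
    (V : Type) [Fintype V] [DecidableEq V] (hcard : Fintype.card V ≤ n)
    (H : SimpleGraph V) (hH : H.Connected)
    (T : SimpleGraph V) [DecidableRel T.Adj] (r : V)
    (hT : T.IsTree) (hdepth : ∀ v : V, T.dist r v ≤ D) :
    1 - (D : ℝ) / (n : ℝ) ^ 48 ≤
      ∑ S ∈ T.edgeFinset.powerset,
        Set.indicator
          {S' : Finset (Sym2 V) |
            ∀ u v : V,
              ((H ⊔ SimpleGraph.fromEdgeSet (↑S' : Set (Sym2 V))).dist u v : ℝ) ≤
                (101 * Real.log n / p) ^ D}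
          (fun S' => p ^ S'.card * (1 - p) ^ (T.edgeFinset.card - S'.card)) S := by
  classical
  set A := T.edgeFinset with hA
  set K : ℝ := 101 * Real.log n / p with hKdef
  set Good : Finset (Sym2 V) → Prop := fun S =>
    ∀ u v : V, ((H ⊔ SimpleGraph.fromEdgeSet (↑S : Set (Sym2 V))).dist u v : ℝ) ≤ K ^ D
    with hGooddef
  have hq0 : (0:ℝ) ≤ 1 - p := by linarith
  have hμ0 : ∀ S : Finset (Sym2 V), 0 ≤ p ^ S.card * (1 - p) ^ (A.card - S.card) :=
    fun S => mul_nonneg (pow_nonneg hp0.le _) (pow_nonneg hq0 _)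
  have hrw : ∑ S ∈ A.powerset,
      Set.indicator
        {S' : Finset (Sym2 V) |
          ∀ u v : V,
            ((H ⊔ SimpleGraph.fromEdgeSet (↑S' : Set (Sym2 V))).dist u v : ℝ) ≤
              (101 * Real.log n / p) ^ D}
        (fun S' => p ^ S'.card * (1 - p) ^ (A.card - S'.card)) S
      = ∑ S ∈ A.powerset.filter Good, p ^ S.card * (1 - p) ^ (A.card - S.card) := by
    rw [Finset.sum_filter]
    refine Finset.sum_congr rfl fun S _ => ?_
    rw [Set.indicator_apply]
    simp only [Set.mem_setOf_eq, hGooddef, hKdef]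
  rw [hrw]
  have htotal : ∑ S ∈ A.powerset, p ^ S.card * (1 - p) ^ (A.card - S.card) = 1 := by
    rw [binom_sum]
    norm_num
  have hsplitGB := Finset.sum_filter_add_sum_filter_not A.powerset Good
    (fun S => p ^ S.card * (1 - p) ^ (A.card - S.card))
  rw [htotal] at hsplitGB
  have hDn : (0:ℝ) ≤ (D : ℝ) / (n : ℝ) ^ 48 := by positivity
  -- it suffices to bound the bad sum
  suffices hbad : ∑ S ∈ A.powerset.filter (fun S => ¬ Good S),
      p ^ S.card * (1 - p) ^ (A.card - S.card) ≤ (D : ℝ) / (n : ℝ) ^ 48 by linarith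
  by_cases hcase : K ^ D < (n : ℝ) - 1
  swap
  · -- deterministic case: every S is good
    push_neg at hcase
    have hallgood : ∀ S ∈ A.powerset, Good S := by
      intro S _
      intro u v
      have hc : (H ⊔ SimpleGraph.fromEdgeSet (↑S : Set (Sym2 V))).Connected :=
        hH.mono le_sup_left
      have hlt := dist_lt_card _ hc u v
      have h1 : ((H ⊔ SimpleGraph.fromEdgeSet (↑S : Set (Sym2 V))).dist u v : ℝ)
          ≤ (Fintype.card V : ℝ) - 1 := by
        have : (H ⊔ SimpleGraph.fromEdgeSet (↑S : Set (Sym2 V))).dist u v + 1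
            ≤ Fintype.card V := hlt
        have := (Nat.cast_le (α := ℝ)).mpr this
        push_cast at this
        linarith
      have h2 : (Fintype.card V : ℝ) ≤ (n : ℝ) := by exact_mod_cast hcard
      linarith
    rw [Finset.filter_false_of_mem (fun S hS h => h (hallgood S hS)), Finset.sum_empty]
    exact hDn
  · -- probabilistic case
    have hn2 : 2 ≤ n := by
      by_contra h
      interval_cases n
      · simp only [Nat.cast_one, Real.log_one] at hKdef
        rw [hKdef] at hcase
        simp only [mul_zero, zero_div, Nat.cast_one] at hcase
        rw [zero_pow (by omega)] at hcase
        linarith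
    have hlog2 : Real.log 2 ≤ Real.log n :=
      Real.log_le_log (by norm_num) (by exact_mod_cast hn2)
    have hlog2' : (0.6931471803 : ℝ) < Real.log 2 := Real.log_two_gt_d9
    have hlogn0 : (0:ℝ) ≤ Real.log n := by linarith
    set L : ℝ := Real.log n / p with hLdef
    have hLlog : Real.log n ≤ L := by
      rw [hLdef, le_div_iff₀ hp0]
      nlinarith
    have hKL : K = 101 * L := by
      rw [hKdef, hLdef, mul_div_assoc]
    have hK1 : (1:ℝ) ≤ K := by
      rw [hKL]
      nlinarith
    have hKD : K ≤ K ^ D := le_self_pow₀ (by linarith) (by omega)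
    have hn101 : 101 * Real.log n < (n : ℝ) - 1 := by
      have : 101 * Real.log n ≤ K := by rw [hKL]; nlinarith
      linarith
    have hn21 : 21 ≤ n := by
      by_contra h
      push_neg at h
      have hle20 : (n : ℝ) ≤ 20 := by exact_mod_cast (by omega : n ≤ 20)
      nlinarith
    have hexp3 : Real.exp 3 < 21 := by
      have h1 : Real.exp 3 = Real.exp 1 ^ 3 := by
        rw [show (3:ℝ) = ((3:ℕ):ℝ) * 1 by norm_num, Real.exp_nat_mul]
      rw [h1]
      have h2 : Real.exp 1 ^ 3 < (2.7182818286 : ℝ) ^ 3 :=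
        pow_lt_pow_left₀ Real.exp_one_lt_d9 (Real.exp_pos 1).le (by norm_num)
      nlinarith
    have hlog3 : (3:ℝ) ≤ Real.log n := by
      have h21 : (3:ℝ) ≤ Real.log 21 :=
        (Real.le_log_iff_exp_le (by norm_num)).mpr hexp3.le
      have : Real.log 21 ≤ Real.log n :=
        Real.log_le_log (by norm_num) (by exact_mod_cast hn21)
      linarith
    have hL3 : (3:ℝ) ≤ L := hlog3.trans hLlog
    set s := ⌈(49:ℝ) * L⌉₊ with hsdef
    have hsge : 49 * L ≤ (s:ℝ) := Nat.le_ceil _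
    have hsle : (s:ℝ) ≤ 49 * L + 1 :=
      (Nat.ceil_lt_add_one (by positivity)).le
    have hs147 : 147 ≤ s := by
      have : (147:ℝ) ≤ (s:ℝ) := by linarith
      exact_mod_cast this
    have hps : 49 * Real.log n ≤ p * s := by
      have h1 : p * (49 * L) = 49 * Real.log n := by
        rw [hLdef]
        field_simp
      nlinarith
    -- parent function
    have hparex : ∀ w : V, ∃ pw : V, 1 ≤ T.dist r w →
        (T.Adj w pw ∧ T.dist r pw + 1 = T.dist r w) := by
      intro w
      by_cases h : 1 ≤ T.dist r w
      · have hne : T.dist w r ≠ 0 := by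
          rw [SimpleGraph.dist_comm]
          omega
        obtain ⟨y, hadj, hy⟩ := dist_succ_exists T hT.isConnected w r hne
        refine ⟨y, fun _ => ⟨hadj, ?_⟩⟩
        have c1 : T.dist y r = T.dist r y := SimpleGraph.dist_comm
        have c2 : T.dist w r = T.dist r w := SimpleGraph.dist_comm
        omega
      · exact ⟨w, fun h' => absurd h' h⟩
    choose par hpar using hparex
    set Bad : ℕ × V → Finset (Sym2 V) → Prop := fun i S =>
      s ≤ (Wset H T r s S i.1 (sigmaF s (D - i.1)) i.2).card ∧
        ∀ w ∈ Wset H T r s S i.1 (sigmaF s (D - i.1)) i.2, s(w, par w) ∉ S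
      with hBaddef
    set I : Finset (ℕ × V) := Finset.Icc 1 D ×ˢ (Finset.univ : Finset V) with hIdef
    -- every bad outcome is covered by some Bad event
    have hcover : ∀ S ∈ A.powerset, ¬ Good S → ∃ i ∈ I, Bad i S := by
      intro S hS hbadS
      by_contra hno
      push_neg at hno
      apply hbadS
      have hgood : ∀ d, 1 ≤ d → d ≤ D → ∀ u : V,
          s ≤ (Wset H T r s S d (sigmaF s (D - d)) u).card →
          ∃ w ∈ Wset H T r s S d (sigmaF s (D - d)) u, s(w, par w) ∈ S := by
        intro d h1 h2 u hcardW
        have hmem : (d, u) ∈ I := by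
          rw [hIdef]
          rw [Finset.mem_product, Finset.mem_Icc]
          exact ⟨⟨h1, h2⟩, Finset.mem_univ u⟩
        have hnb := hno (d, u) hmem
        rw [hBaddef] at hnb
        by_contra hnone
        push_neg at hnone
        exact hnb ⟨hcardW, hnone⟩
      have hdist := det_lemma H T hH hT.isConnected r D s hdepth par hpar S hgood
      intro u v
      have h1 := hdist u v
      have h2 : (2 * sigmaF s D : ℝ) ≤ K ^ D := by
        rw [hKL]
        exact N1 s D L hL3 (by omega) hs147 hsle
      have h3 : ((H ⊔ SimpleGraph.fromEdgeSet (↑S : Set (Sym2 V))).dist u v : ℝ)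
          ≤ (2 * sigmaF s D : ℝ) := by exact_mod_cast h1
      linarith
    -- union bound
    have hub := union_bound A.powerset
      (fun S => p ^ S.card * (1 - p) ^ (A.card - S.card)) hμ0 I
      (fun S => ¬ Good S) Bad hcover
    refine hub.trans ?_
    -- bound each individual bad event
    have heach : ∀ i ∈ I, ∑ S ∈ A.powerset.filter (Bad i),
        p ^ S.card * (1 - p) ^ (A.card - S.card) ≤ (1 - p) ^ s := by
      intro i hi
      obtain ⟨d, u⟩ := i
      rw [hIdef, Finset.mem_product, Finset.mem_Icc] at hi
      obtain ⟨⟨hd1, hdD⟩, -⟩ := hi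
      set A₁ := A.filter (fun e => d ≤ loweF T r e) with hA₁def
      have hA₁sub : A₁ ⊆ A := Finset.filter_subset _ _
      set F : Finset (Sym2 V) → Finset (Sym2 V) := fun S₁ =>
        (Wset H T r s S₁ d (sigmaF s (D - d)) u).image (fun w => s(w, par w))
        with hFdef
      -- facts about members of Wset
      have hWfact : ∀ (S₁ : Finset (Sym2 V)) (w : V),
          w ∈ Wset H T r s S₁ d (sigmaF s (D - d)) u →
          T.dist r w = d ∧ T.Adj w (par w) ∧ T.dist r (par w) + 1 = d := by
        intro S₁ w hw
        simp only [Wset, Finset.mem_filter] at hw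
        obtain ⟨-, hwd, -⟩ := hw
        obtain ⟨ha, hb⟩ := hpar w (by omega)
        exact ⟨hwd, ha, by omega⟩
      have hFsub : ∀ S₁, F S₁ ⊆ A \ A₁ := by
        intro S₁ e he
        rw [hFdef] at he
        simp only [Finset.mem_image] at he
        obtain ⟨w, hw, rfl⟩ := he
        obtain ⟨hwd, hadj, hpd⟩ := hWfact S₁ w hw
        rw [Finset.mem_sdiff]
        constructor
        · rw [hA, SimpleGraph.mem_edgeFinset]
          exact hadj
        · rw [hA₁def, Finset.mem_filter]
          rintro ⟨-, hle⟩
          have : loweF T r s(w, par w) = min (T.dist r w) (T.dist r (par w)) := rfl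
          omega
      -- the W set only depends on S ∩ A₁
      have hWeq : ∀ S ∈ A.powerset,
          Wset H T r s (S ∩ A₁) d (sigmaF s (D - d)) u
            = Wset H T r s S d (sigmaF s (D - d)) u := by
        intro S hS
        have hSA : S ⊆ A := Finset.mem_powerset.mp hS
        have hfeq : (S ∩ A₁).filter (fun e => d ≤ loweF T r e)
            = S.filter (fun e => d ≤ loweF T r e) := by
          ext e
          constructor
          · intro he
            rw [Finset.mem_filter] at he ⊢
            exact ⟨(Finset.mem_inter.mp he.1).1, he.2⟩
          · intro he
            rw [Finset.mem_filter] at he ⊢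
            refine ⟨Finset.mem_inter.mpr ⟨he.1, ?_⟩, he.2⟩
            rw [hA₁def, Finset.mem_filter]
            exact ⟨hSA he.1, he.2⟩
        have hGdeq : Gd H T r (S ∩ A₁) d = Gd H T r S d := by
          unfold Gd
          rw [hfeq]
        unfold Wset
        rw [hGdeq]
      have hQ : ∀ S ∈ A.powerset, Bad (d, u) S →
          s ≤ (F (S ∩ A₁)).card ∧ Disjoint (F (S ∩ A₁)) S := by
        intro S hS hBadS
        rw [hBaddef] at hBadS
        obtain ⟨hcardW, hnotin⟩ := hBadS
        have hWeq' := hWeq S hS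
        constructor
        · rw [hFdef]
          dsimp only
          rw [hWeq']
          rw [Finset.card_image_of_injOn]
          · exact hcardW
          · intro w₁ hw₁ w₂ hw₂ heq
            obtain ⟨h1d, -, h1p⟩ := hWfact S w₁ hw₁
            obtain ⟨h2d, -, h2p⟩ := hWfact S w₂ hw₂
            rw [Sym2.eq_iff] at heq
            rcases heq with ⟨h, -⟩ | ⟨h1, h2⟩
            · exact h
            · exfalso
              rw [h1] at h1d
              omega
        · rw [hFdef]
          dsimp only
          rw [hWeq']
          rw [Finset.disjoint_left]
          intro e he
          simp only [Finset.mem_image] at he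
          obtain ⟨w, hw, rfl⟩ := he
          exact hnotin w hw
      exact prob_bound A A₁ hA₁sub p hp0.le hp1.le s F hFsub (Bad (d, u)) hQ
    refine (Finset.sum_le_sum heach).trans ?_
    rw [Finset.sum_const, hIdef, Finset.card_product, Nat.card_Icc,
      Finset.card_univ, nsmul_eq_mul]
    -- final numeric bound
    have hN2 : (1 - p) ^ s ≤ 1 / (n : ℝ) ^ 49 := N2 n s p hp0 hp1 (by omega) hps
    have hcV : ((Fintype.card V : ℕ) : ℝ) ≤ (n : ℝ) := by exact_mod_cast hcard
    have hDle : ((D + 1 - 1) * Fintype.card V : ℕ) = D * Fintype.card V := by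
      rw [Nat.add_sub_cancel]
    rw [hDle]
    have hnpos : (0:ℝ) < (n:ℝ) := by exact_mod_cast hn
    have hstep : ((D * Fintype.card V : ℕ) : ℝ) * (1 - p) ^ s
        ≤ ((D : ℝ) * (n : ℝ)) * (1 / (n : ℝ) ^ 49) := by
      have hc1 : ((D * Fintype.card V : ℕ) : ℝ) ≤ (D : ℝ) * (n : ℝ) := by
        push_cast
        have : (0:ℝ) ≤ (D:ℝ) := by positivity
        nlinarith
      have hc2 : (0:ℝ) ≤ ((D * Fintype.card V : ℕ) : ℝ) := by positivity
      have hc3 : (0:ℝ) ≤ (1 - p) ^ s := pow_nonneg hq0 _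
      have hc4 : (0:ℝ) ≤ 1 / (n : ℝ) ^ 49 := by positivity
      exact mul_le_mul hc1 hN2 hc3 (by positivity)
    refine hstep.trans ?_
    have : ((D : ℝ) * (n : ℝ)) * (1 / (n : ℝ) ^ 49) = (D : ℝ) / (n : ℝ) ^ 48 := by
      rw [pow_succ' (n:ℝ) 48]
      field_simp
    rw [this]
end

section
/- Let k, n be positive integers and let G be a k-edge-connected simple graph on n vertices. Let S be a nonempty subset of V(G) such that the induced subgraph G[S] is connected, and let G_S be the subgraph of G whose vertex set consists of S together with all vertices of G having a neighbor in S, and whose edge set consists of all edges of G with both endpoints in S together with all edges of G with exactly one endpoint in S. Then G_S is connected and its diameter is at most 12n/k. -/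
open SimpleGraph

/-- The subgraph `G_S` of `G`: its vertices are `S` together with all vertices having a
neighbor in `S`, and its edges are all edges of `G` with at least one endpoint in `S`. -/
def nbhdSubgraph {V : Type} (G : SimpleGraph V) (S : Set V) : G.Subgraph where
  verts := S ∪ {v | ∃ u ∈ S, G.Adj u v}
  Adj a b := G.Adj a b ∧ (a ∈ S ∨ b ∈ S)
  adj_sub h := h.1
  edge_vert := by
    rintro a b ⟨hab, ha | hb⟩
    · exact Or.inl ha
    · exact Or.inr ⟨b, hb, hab.symm⟩
  symm := ⟨fun a b h => ⟨h.1.symm, h.2.symm⟩⟩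

/-- On any walk, the extended distance between the `i`-th and `j`-th vertex is at
most `j - i`. -/
lemma edist_getVert_le_aux {V : Type} {G : SimpleGraph V} {u v : V} (p : G.Walk u v) :
    ∀ i j : ℕ, i ≤ j → G.edist (p.getVert i) (p.getVert j) ≤ (j - i : ℕ) := by
  induction p with
  | nil =>
    intro i j _
    simp [SimpleGraph.Walk.getVert]
  | @cons a b c h q ih =>
    intro i j hij
    match i, j with
    | 0, 0 => simp [edist_self]
    | 0, (m+1) =>
      have h1 : G.edist a b ≤ 1 := by
        simpa using h.toWalk.edist_le
      have h2 : G.edist b (q.getVert m) ≤ (m : ℕ∞) := by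
        have := ih 0 m (Nat.zero_le m)
        simpa using this
      calc G.edist ((q.cons h).getVert 0) ((q.cons h).getVert (m+1))
          = G.edist a (q.getVert m) := by
            simp [SimpleGraph.Walk.getVert_zero, SimpleGraph.Walk.getVert_cons_succ]
        _ ≤ G.edist a b + G.edist b (q.getVert m) := SimpleGraph.edist_triangle
        _ ≤ 1 + (m : ℕ∞) := add_le_add h1 h2
        _ = ((m + 1 - 0 : ℕ) : ℕ∞) := by
            push_cast
            ring
    | (i+1), (j+1) =>
      have := ih i j (Nat.le_of_succ_le_succ hij)
      simpa [SimpleGraph.Walk.getVert_cons_succ, Nat.succ_sub_succ] using this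

lemma dist_getVert_le {V : Type} {G : SimpleGraph V} {u v : V} (p : G.Walk u v)
    {i j : ℕ} (hij : i ≤ j) : G.dist (p.getVert i) (p.getVert j) ≤ j - i := by
  have h := edist_getVert_le_aux p i j hij
  have := ENat.toNat_le_toNat h (by simp)
  rw [ENat.toNat_coe] at this
  simpa [SimpleGraph.dist] using this

/-- A `k`-edge-connected graph has minimum degree at least `k`. -/
lemma mindeg_of_kEdgeConnected {V : Type} [Fintype V] {G : SimpleGraph V} {k : ℕ}
    (hG : IsKEdgeConnected G k) [DecidableEq V] [DecidableRel G.Adj] (v : V) :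
    k ≤ G.degree v := by
  by_contra hlt
  push_neg at hlt
  have hfin : (G.incidenceSet v).Finite := Set.toFinite _
  have hsub : G.incidenceSet v ⊆ G.edgeSet := fun e he => he.1
  have hncard : (G.incidenceSet v).ncard = G.degree v := by
    rw [Set.ncard_eq_toFinset_card', Set.toFinset_card,
      SimpleGraph.card_incidenceSet_eq_degree]
  have hconn := hG.2 (G.incidenceSet v) hfin hsub (by rw [hncard]; exact hlt)
  -- there is another vertex
  have hcard2 : 2 ≤ Fintype.card V := by
    have := hG.1
    rwa [Nat.card_eq_fintype_card] at this
  obtain ⟨u, hu⟩ := Fintype.exists_ne_of_one_lt_card (by omega) v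
  obtain ⟨w⟩ := hconn.preconnected v u
  cases w with
  | nil => exact hu rfl
  | cons hadj w' =>
    rw [SimpleGraph.deleteEdges_adj] at hadj
    exact hadj.2 ⟨hadj.1, Sym2.mem_mk_left _ _⟩

theorem stmt_12 (k n : ℕ) (hk : 0 < k) (hn : 0 < n)
    (V : Type) [Fintype V] (hcard : Fintype.card V = n)
    (G : SimpleGraph V) (hG : IsKEdgeConnected G k)
    (S : Set V) (hS : S.Nonempty) (hind : (G.induce S).Connected) :
    (nbhdSubgraph G S).Connected ∧
      ∀ u v : (nbhdSubgraph G S).verts,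
        (((nbhdSubgraph G S).coe.dist u v : ℝ)) ≤ 12 * n / k := by
  classical
  set H := nbhdSubgraph G S with hH
  -- the graph hom from the induced graph on S into H.coe
  have memS : ∀ x ∈ S, x ∈ H.verts := fun x hx => Or.inl hx
  let f : (G.induce S) →g H.coe :=
    ⟨fun a => ⟨a.1, memS a.1 a.2⟩, by
      rintro ⟨a, ha⟩ ⟨b, hb⟩ hab
      simp only [comap_adj, Function.Embedding.coe_subtype] at hab
      exact ⟨hab, Or.inl ha⟩⟩
  -- every vertex of H is equal or adjacent (in H.coe) to a vertex of S
  have reach_to_S : ∀ x : H.verts, ∃ a : S, H.coe.Reachable x (f a) := by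
    rintro ⟨x, hx | ⟨u, hu, hadj⟩⟩
    · exact ⟨⟨x, hx⟩, Reachable.refl _⟩
    · refine ⟨⟨u, hu⟩, Reachable.symm (SimpleGraph.Adj.reachable ?_)⟩
      exact ⟨hadj, Or.inl hu⟩
  have hconn : H.Connected := by
    rw [SimpleGraph.Subgraph.connected_iff']
    have : Nonempty H.verts := ⟨⟨hS.choose, Or.inl hS.choose_spec⟩⟩
    refine ⟨fun x y => ?_⟩
    obtain ⟨a, hax⟩ := reach_to_S x
    obtain ⟨b, hby⟩ := reach_to_S y
    exact hax.trans ((Reachable.map f (hind.preconnected a b)).trans hby.symm)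
  refine ⟨hconn, ?_⟩
  intro u v
  set d := H.coe.dist u v with hd
  by_cases hd0 : d = 0
  · rw [hd0]
    push_cast
    positivity
  -- a shortest walk
  obtain ⟨p, hp⟩ := SimpleGraph.exists_walk_of_dist_ne_zero hd0
  rw [← hd] at hp
  have hcoeconn : H.coe.Connected := hconn.coe
  -- distances along the shortest walk are exact lower bounds
  have keydist : ∀ a b : ℕ, a ≤ b → b ≤ d → (b - a : ℕ) ≤ H.coe.dist (p.getVert a) (p.getVert b) := by
    intro a b hab hbd
    have h1 : H.coe.dist u (p.getVert a) ≤ a := by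
      have := dist_getVert_le p (Nat.zero_le a)
      simpa [p.getVert_zero] using this
    have h2 : H.coe.dist (p.getVert b) v ≤ d - b := by
      have := dist_getVert_le p (i := b) (j := p.length) (by omega)
      rw [p.getVert_length, hp] at this
      exact this
    have h3 : d ≤ H.coe.dist u (p.getVert a) + H.coe.dist (p.getVert a) (p.getVert b) +
        H.coe.dist (p.getVert b) v := by
      calc d = H.coe.dist u v := hd
        _ ≤ H.coe.dist u (p.getVert b) + H.coe.dist (p.getVert b) v :=
            hcoeconn.dist_triangle
        _ ≤ (H.coe.dist u (p.getVert a) + H.coe.dist (p.getVert a) (p.getVert b)) +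
            H.coe.dist (p.getVert b) v := by
            exact add_le_add_left hcoeconn.dist_triangle _
    omega
  set m := (d + 5) / 6 with hm
  -- pick an S-vertex among positions 6i, 6i+1
  have pick : ∀ i : ℕ, i < m → ∃ e : ℕ, (6 * i ≤ e ∧ e ≤ 6 * i + 1 ∧ e ≤ d) ∧
      ((p.getVert e : V) ∈ S) := by
    intro i hi
    have h6i : 6 * i + 1 ≤ d := by omega
    have hadj : H.coe.Adj (p.getVert (6 * i)) (p.getVert (6 * i + 1)) :=
      p.adj_getVert_succ (by omega)
    have hadj' : H.Adj (p.getVert (6 * i) : V) (p.getVert (6 * i + 1) : V) := hadj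
    rcases hadj'.2 with hmem | hmem
    · exact ⟨6 * i, ⟨le_refl _, by omega, by omega⟩, hmem⟩
    · exact ⟨6 * i + 1, ⟨by omega, le_refl _, h6i⟩, hmem⟩
  choose e he hes using pick
  -- closed neighborhoods
  let T : ℕ → Finset V := fun i =>
    if hi : i < m then insert ((p.getVert (e i hi) : V)) (G.neighborFinset (p.getVert (e i hi) : V))
    else ∅
  have hTcard : ∀ i : ℕ, i < m → k + 1 ≤ (T i).card := by
    intro i hi
    have hdeg := mindeg_of_kEdgeConnected hG ((p.getVert (e i hi) : V))
    simp only [T, dif_pos hi]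
    rw [Finset.card_insert_of_notMem (by simp)]
    rw [SimpleGraph.card_neighborFinset_eq_degree]
    omega
  -- helper : if x is in T i then x is at H.coe-distance ≤ 1 from getVert (e i)
  have hTdist : ∀ (i : ℕ) (hi : i < m) (x : V), x ∈ T i →
      ∃ hx : x ∈ H.verts, H.coe.dist (p.getVert (e i hi)) ⟨x, hx⟩ ≤ 1 := by
    intro i hi x hx
    simp only [T, dif_pos hi, Finset.mem_insert, SimpleGraph.mem_neighborFinset] at hx
    rcases hx with rfl | hadj
    · refine ⟨(p.getVert (e i hi)).2, ?_⟩
      have : (p.getVert (e i hi)) = (⟨(p.getVert (e i hi) : V), (p.getVert (e i hi)).2⟩ :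
          H.verts) := by ext; rfl
      rw [← this, SimpleGraph.dist_self]
      omega
    · have hxv : x ∈ H.verts := Or.inr ⟨_, hes i hi, hadj⟩
      refine ⟨hxv, ?_⟩
      have hadj2 : H.coe.Adj (p.getVert (e i hi)) ⟨x, hxv⟩ := ⟨hadj, Or.inl (hes i hi)⟩
      calc H.coe.dist (p.getVert (e i hi)) ⟨x, hxv⟩ ≤ hadj2.toWalk.length :=
            SimpleGraph.dist_le _
        _ = 1 := rfl
  -- disjointness
  have hdisj : ∀ i ∈ Finset.range m, ∀ j ∈ Finset.range m, i ≠ j → Disjoint (T i) (T j) := by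
    intro i hi j hj hne
    rw [Finset.mem_range] at hi hj
    wlog hij : i < j generalizing i j
    · exact (this j hj i hi hne.symm (by omega)).symm
    rw [Finset.disjoint_left]
    intro x hxi hxj
    obtain ⟨hxv, h1⟩ := hTdist i hi x hxi
    obtain ⟨_, h2⟩ := hTdist j hj x hxj
    have hlow : (e j hj - e i hi : ℕ) ≤ H.coe.dist (p.getVert (e i hi)) (p.getVert (e j hj)) := by
      refine keydist _ _ ?_ (he j hj).2.2
      have := (he i hi).2.1
      have := (he j hj).1
      omega
    have hup : H.coe.dist (p.getVert (e i hi)) (p.getVert (e j hj)) ≤ 2 := by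
      calc H.coe.dist (p.getVert (e i hi)) (p.getVert (e j hj)) ≤
          H.coe.dist (p.getVert (e i hi)) ⟨x, hxv⟩ +
            H.coe.dist (⟨x, hxv⟩ : H.verts) (p.getVert (e j hj)) := hcoeconn.dist_triangle
        _ ≤ 1 + 1 := add_le_add h1 (by rwa [SimpleGraph.dist_comm])
        _ = 2 := rfl
    have hei := (he i hi).2.1
    have hej := (he j hj).1
    omega
  -- counting
  have hcount : m * (k + 1) ≤ n := by
    calc m * (k + 1) = ∑ _i ∈ Finset.range m, (k + 1) := by
          rw [Finset.sum_const, Finset.card_range, smul_eq_mul]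
      _ ≤ ∑ i ∈ Finset.range m, (T i).card := by
          refine Finset.sum_le_sum fun i hi => hTcard i (Finset.mem_range.mp hi)
      _ = ((Finset.range m).biUnion T).card := (Finset.card_biUnion hdisj).symm
      _ ≤ (Finset.univ : Finset V).card := Finset.card_le_card (Finset.subset_univ _)
      _ = n := by rw [Finset.card_univ, hcard]
  have hdm : d ≤ 6 * m := by omega
  have hkey : d * k ≤ 12 * n := by
    calc d * k ≤ (6 * m) * k := Nat.mul_le_mul_right k hdm
      _ = 6 * (m * k) := by ring
      _ ≤ 6 * (m * (k + 1)) := Nat.mul_le_mul_left 6 (Nat.mul_le_mul_left m (by omega))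
      _ ≤ 6 * n := Nat.mul_le_mul_left 6 hcount
      _ ≤ 12 * n := by omega
  rw [le_div_iff₀ (by exact_mod_cast hk : (0:ℝ) < (k:ℝ))]
  calc ((d : ℝ)) * k = ((d * k : ℕ) : ℝ) := by push_cast; ring
    _ ≤ ((12 * n : ℕ) : ℝ) := by exact_mod_cast hkey
    _ = 12 * n := by push_cast; ring
end

section
/- Let m, k be integers with m ≥ k ≥ 2, and define the simple graph F_{m,k} as follows. Its vertices are: a root c; vertices u_1, …, u_m; and, for every j ∈ {1,…,m²} and i ∈ {1,…,m}, a set V_{j,i} = {x_{j,i,1}, …, x_{j,i,k}} of k vertices. Its edges are: the edge (u_i, c) for every i; all edges between pairs of distinct vertices within each V_{j,i} (so each V_{j,i} spans a k-clique); all edges between u_i and every vertex of V_{j,i}, for every i and j; and, for every j and every 1 ≤ i < m, the matching edges (x_{j,i,t}, x_{j,i+1,t}) for every t ∈ {1,…,k}. Then F_{m,k} is k-edge-connected and has diameter at most 4. -/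
open SimpleGraph

/-- The vertex set of the graph `F_{m,k}`: the root `c` (as `Sum.inl ()`),
the vertices `u_i` (as `Sum.inr (Sum.inl i)`), and the vertices `x_{j,i,t}` of the
cliques `V_{j,i}` (as `Sum.inr (Sum.inr (j, i, t))`). -/
abbrev FVert (m k : ℕ) : Type := Unit ⊕ (Fin m ⊕ (Fin (m ^ 2) × Fin m × Fin k))

/-- The generating relation for the edges of `F_{m,k}`:
`u_i — c`; `u_i — x_{j,i,t}` for all `j, t`; all edges within each clique `V_{j,i}`;
and the matching edges `x_{j,i,t} — x_{j,i+1,t}`. -/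
def FRel (m k : ℕ) : FVert m k → FVert m k → Prop
  | Sum.inr (Sum.inl _), Sum.inl _ => True
  | Sum.inr (Sum.inl i), Sum.inr (Sum.inr (_, i', _)) => i = i'
  | Sum.inr (Sum.inr (j, i, t)), Sum.inr (Sum.inr (j', i', t')) =>
      (j = j' ∧ i = i') ∨ (j = j' ∧ t = t' ∧ (i : ℕ) + 1 = (i' : ℕ))
  | _, _ => False

/-- The graph `F_{m,k}`. -/
def FGraph (m k : ℕ) : SimpleGraph (FVert m k) := SimpleGraph.fromRel (FRel m k)

def vc (m k : ℕ) : FVert m k := Sum.inl ()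
def vU (m k : ℕ) (i : Fin m) : FVert m k := Sum.inr (Sum.inl i)
def vX (m k : ℕ) (j : Fin (m ^ 2)) (i : Fin m) (t : Fin k) : FVert m k :=
  Sum.inr (Sum.inr (j, i, t))

lemma adjUc (m k : ℕ) (i : Fin m) : (FGraph m k).Adj (vU m k i) (vc m k) := by
  rw [FGraph, fromRel_adj]
  exact ⟨by simp [vU, vc], Or.inl (by simp [FRel, vU, vc])⟩

lemma adjXU (m k : ℕ) (j : Fin (m ^ 2)) (i : Fin m) (t : Fin k) :
    (FGraph m k).Adj (vX m k j i t) (vU m k i) := by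
  rw [FGraph, fromRel_adj]
  exact ⟨by simp [vU, vX], Or.inr (by simp [FRel, vU, vX])⟩

lemma adjXXc (m k : ℕ) (j : Fin (m ^ 2)) (i : Fin m) {t t' : Fin k} (h : t ≠ t') :
    (FGraph m k).Adj (vX m k j i t) (vX m k j i t') := by
  rw [FGraph, fromRel_adj]
  exact ⟨by simp [vX, h], Or.inl (by simp [FRel, vX])⟩

lemma adjXXm (m k : ℕ) (j : Fin (m ^ 2)) {a b : Fin m} (t : Fin k)
    (h : (a : ℕ) + 1 = b) : (FGraph m k).Adj (vX m k j a t) (vX m k j b t) := by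
  rw [FGraph, fromRel_adj]
  refine ⟨by simp [vX]; omega, Or.inl (by simp [FRel, vX]; omega)⟩

lemma adjXXj {m k : ℕ} {j j' : Fin (m ^ 2)} {i i' : Fin m} {t t' : Fin k}
    (h : (FGraph m k).Adj (vX m k j i t) (vX m k j' i' t')) : j = j' := by
  rw [FGraph, fromRel_adj] at h
  rcases h with ⟨-, h | h⟩ <;> simp [FRel, vX] at h <;> tauto

lemma inj_card_le {α : Type*} {F : Set α} (hF : F.Finite) {n : ℕ} (f : Fin n → α)
    (hmem : ∀ i, f i ∈ F) (hinj : Function.Injective f) : n ≤ F.ncard := by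
  have h1 : (Set.range f).ncard = n := by
    rw [← Nat.card_coe_set_eq, Nat.card_range_of_injective hinj,
      Nat.card_eq_fintype_card, Fintype.card_fin]
  calc n = (Set.range f).ncard := h1.symm
    _ ≤ F.ncard := Set.ncard_le_ncard (Set.range_subset_iff.mpr hmem) hF

theorem stmt_14 (m k : ℕ) (hk : 2 ≤ k) (hm : k ≤ m) :
    IsKEdgeConnected (FGraph m k) k ∧
      ∀ u v : FVert m k, (FGraph m k).dist u v ≤ 4 := by
  have hm2 : 2 ≤ m := hk.trans hm
  have hm0 : 0 < m := by omega
  have hk0 : 0 < k := by omega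
  have hmm : m ≤ m ^ 2 := by nlinarith
  constructor
  · constructor
    · have : Nontrivial (FVert m k) :=
        ⟨Sum.inl (), Sum.inr (Sum.inl ⟨0, hm0⟩), by simp⟩
      rw [Nat.card_eq_fintype_card]
      exact Fintype.one_lt_card
    · intro F hFfin hFsub hFcard
      classical
      -- find an untouched column j*
      have hjstar : ∃ js : Fin (m ^ 2), ∀ (i : Fin m) (t : Fin k) (w : FVert m k),
          s(vX m k js i t, w) ∉ F := by
        by_contra hcon
        push_neg at hcon
        choose fi ft fw hf using hcon
        have hinj : Function.Injective
            fun j : Fin (m ^ 2) => s(vX m k j (fi j) (ft j), fw j) := by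
          intro a b hab
          rw [Sym2.eq_iff] at hab
          rcases hab with ⟨h1, -⟩ | ⟨h1, h2⟩
          · simp [vX] at h1; exact h1.1
          · have hmem : s(vX m k a (fi a) (ft a), vX m k b (fi b) (ft b)) ∈ F := by
              rw [← h2]; exact hf a
            have hadj := (hFsub hmem)
            rw [mem_edgeSet] at hadj
            exact adjXXj hadj
        have := inj_card_le hFfin _ hf hinj
        omega
      obtain ⟨js, hjs⟩ := hjstar
      have hjs' : ∀ (w : FVert m k) (i : Fin m) (t : Fin k),
          s(w, vX m k js i t) ∉ F := by
        intro w i t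
        rw [Sym2.eq_swap]; exact hjs i t w
      set H := (FGraph m k).deleteEdges F with hH
      set t0 : Fin k := ⟨0, hk0⟩ with ht0
      -- reach across columns
      have col : ∀ n (h : n < m),
          H.Reachable (vX m k js ⟨0, hm0⟩ t0) (vX m k js ⟨n, h⟩ t0) := by
        intro n
        induction n with
        | zero => intro h; exact Reachable.refl _
        | succ p ih =>
          intro h
          have hp : p < m := by omega
          refine (ih hp).trans (Adj.reachable ?_)
          rw [hH, deleteEdges_adj]
          exact ⟨adjXXm m k js t0 rfl, hjs _ _ _⟩
      have reachX0 : ∀ a : Fin m,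
          H.Reachable (vX m k js a t0) (vX m k js ⟨0, hm0⟩ t0) := by
        intro a
        have := (col a.val a.isLt).symm
        simp only [Fin.eta] at this; exact this
      -- each u_i reaches u_{i'}
      have hUU : ∀ i i' : Fin m, H.Reachable (vU m k i) (vU m k i') := by
        have hUX : ∀ i : Fin m, H.Reachable (vU m k i) (vX m k js ⟨0, hm0⟩ t0) := by
          intro i
          refine (Adj.reachable ?_).trans (reachX0 i)
          rw [hH, deleteEdges_adj]
          exact ⟨(adjXU m k js i t0).symm, hjs' _ _ _⟩
        intro i i'
        exact (hUX i).trans (hUX i').symm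
      -- some u_{i0}–c edge survives
      have hic : ∃ i0 : Fin m, s(vU m k i0, vc m k) ∉ F := by
        by_contra hcon
        push_neg at hcon
        have hinj : Function.Injective fun i : Fin m => s(vU m k i, vc m k) := by
          intro a b hab
          rw [Sym2.eq_iff] at hab
          rcases hab with ⟨h1, -⟩ | ⟨h1, -⟩ <;> simp [vU, vc] at h1
          · exact h1
        have := inj_card_le hFfin _ hcon hinj
        omega
      obtain ⟨i0, hi0⟩ := hic
      -- each u_i reaches c
      have hUc : ∀ i : Fin m, H.Reachable (vU m k i) (vc m k) := by
        intro i
        refine (hUU i i0).trans (Adj.reachable ?_)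
        rw [hH, deleteEdges_adj]
        exact ⟨adjUc m k i0, hi0⟩
      -- each x_{j,i,t} reaches u_i
      have hXU : ∀ (j : Fin (m ^ 2)) (i : Fin m) (t : Fin k),
          H.Reachable (vX m k j i t) (vU m k i) := by
        intro j i t
        by_cases h0 : s(vX m k j i t, vU m k i) ∈ F
        · have hsp : ∃ t' : Fin k, t' ≠ t ∧ s(vX m k j i t, vX m k j i t') ∉ F ∧
              s(vX m k j i t', vU m k i) ∉ F := by
            by_contra hcon
            push_neg at hcon
            set f : Fin k → Sym2 (FVert m k) := fun s =>
              if s = t then s(vX m k j i t, vU m k i)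
              else if s(vX m k j i t, vX m k j i s) ∈ F then s(vX m k j i t, vX m k j i s)
              else s(vX m k j i s, vU m k i) with hf
            have hmem : ∀ s, f s ∈ F := by
              intro s
              rw [hf]
              by_cases hs : s = t
              · simp only [hs, if_true, if_pos]; exact h0
              · simp only [hs, if_false]
                by_cases h1 : s(vX m k j i t, vX m k j i s) ∈ F
                · simp only [h1, if_true]
                · simp only [h1, if_false]
                  exact hcon s hs h1
            have hinj : Function.Injective f := by
              intro a b hab
              rw [hf] at hab
              by_cases ha : a = t <;> by_cases hb : b = t <;>
                simp only [ha, hb, if_pos, if_neg, if_true] at hab <;>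
                try (subst ha; subst hb; rfl)
              all_goals (split_ifs at hab <;>
                simp [Sym2.eq_iff, vX, vU] at hab <;> tauto)
            have := inj_card_le hFfin _ hmem hinj
            omega
          obtain ⟨t', ht', h1, h2⟩ := hsp
          have a1 : H.Adj (vX m k j i t) (vX m k j i t') := by
            rw [hH, deleteEdges_adj]
            exact ⟨adjXXc m k j i (fun hh => ht' hh.symm), h1⟩
          have a2 : H.Adj (vX m k j i t') (vU m k i) := by
            rw [hH, deleteEdges_adj]
            exact ⟨adjXU m k j i t', h2⟩
          exact a1.reachable.trans a2.reachable
        · refine Adj.reachable ?_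
          rw [hH, deleteEdges_adj]
          exact ⟨adjXU m k j i t, h0⟩
      -- all vertices reach c
      have hall : ∀ v : FVert m k, H.Reachable v (vc m k) := by
        intro v
        match v with
        | Sum.inl () => exact Reachable.refl _
        | Sum.inr (Sum.inl i) => exact hUc i
        | Sum.inr (Sum.inr (j, i, t)) => exact (hXU j i t).trans (hUc i)
      rw [connected_iff]
      exact ⟨fun u v => (hall u).trans (hall v).symm, ⟨vc m k⟩⟩
  · -- diameter
    have toC : ∀ v : FVert m k, ∃ p : (FGraph m k).Walk v (vc m k), p.length ≤ 2 := by
      intro v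
      match v with
      | Sum.inl () => exact ⟨Walk.nil, Nat.le_of_ble_eq_true rfl⟩
      | Sum.inr (Sum.inl i) => exact ⟨Walk.cons (adjUc m k i) Walk.nil, Nat.le_of_ble_eq_true rfl⟩
      | Sum.inr (Sum.inr (j, i, t)) =>
        exact ⟨Walk.cons (adjXU m k j i t) (Walk.cons (adjUc m k i) Walk.nil), Nat.le_of_ble_eq_true rfl⟩
    intro u v
    obtain ⟨p, hp⟩ := toC u
    obtain ⟨q, hq⟩ := toC v
    calc (FGraph m k).dist u v ≤ (p.append q.reverse).length := dist_le _
      _ = p.length + q.length := by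
          rw [Walk.length_append, Walk.length_reverse]
      _ ≤ 4 := by omega
end

section
/- Let w ≥ 2 and D ≥ 1 be integers, and let T_{w,D} be the complete w-ary rooted tree of depth D, with vertices v_1, …, v_N indexed in post-order. Then for every index i such that v_i is a leaf of T_{w,D} and v_i is not the last leaf in the post-order, every edge of T_{w,D} with one endpoint in {v_1, …, v_i} and the other endpoint in {v_{i+1}, …, v_N} has at least one endpoint that is an ancestor of v_i; consequently, at most D·w edges of T_{w,D} join {v_1, …, v_i} to {v_{i+1}, …, v_N}. -/
open SimpleGraph

/-- Vertices of the complete `w`-ary rooted tree of depth `D`: a vertex is the list of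
child indices on the path from the root to it (the root is `[]`, and the `j`-th child of
`l` is `l ++ [j]`); leaves are exactly the lists of length `D`. -/
abbrev TVert (w D : ℕ) : Type := {l : List (Fin w) // l.length ≤ D}

/-- The complete `w`-ary rooted tree of depth `D`, as a simple graph: each vertex `l` of
depth less than `D` is joined to its children `l ++ [j]`. -/
def TreeGraph (w D : ℕ) : SimpleGraph (TVert w D) where
  Adj a b := (∃ j : Fin w, b.val = a.val ++ [j]) ∨ (∃ j : Fin w, a.val = b.val ++ [j])
  symm := ⟨fun a b h => h.symm⟩
  loopless := by
    constructor
    intro a h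
    rcases h with ⟨j, hj⟩ | ⟨j, hj⟩ <;>
    · have h2 := congrArg List.length hj
      simp at h2

/-- The (strict) post-order on the vertices of the `w`-ary tree: `a` comes strictly
before `b` iff `a` is a proper descendant of `b` (i.e. `b` is a proper prefix of `a`), or
`a` and `b` leave their common prefix with child indices `x < y` respectively. -/
def PostLT {w : ℕ} (a b : List (Fin w)) : Prop :=
  (b <+: a ∧ a ≠ b) ∨
    ∃ (p s t : List (Fin w)) (x y : Fin w), x < y ∧ a = p ++ x :: s ∧ b = p ++ y :: t

/-- `a` weakly precedes `b` in post-order. -/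
def PostLE {w : ℕ} {D : ℕ} (a b : TVert w D) : Prop :=
  PostLT a.val b.val ∨ a = b

/-- `a` is an ancestor of `b`: `a ≠ b` and `a` lies on the path from the root to `b`,
i.e. `a` is a proper prefix of `b`. -/
def IsAncestor {w D : ℕ} (a b : TVert w D) : Prop :=
  a.val <+: b.val ∧ a ≠ b

lemma key_lemma {w D : ℕ} (v a b : TVert w D) (hleaf : v.val.length = D)
    (hadj : (TreeGraph w D).Adj a b) (ha : PostLE a v) (hb : ¬ PostLE b v) :
    ∃ j : Fin w, a.val = b.val ++ [j] ∧ b.val <+: v.val ∧ b.val ≠ v.val := by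
  rcases hadj with ⟨j, hj⟩ | ⟨j, hj⟩
  · -- b = a ++ [j] : impossible
    exfalso
    rcases ha with hlt | rfl
    · rcases hlt with ⟨hpre, hne⟩ | ⟨p, s, t, x, y, hxy, hA, hV⟩
      · -- v <+: a, a ≠ v : length contradiction
        have h1 := hpre.length_le
        have h2 := a.property
        have : a.val = v.val := (hpre.eq_of_length_le (by omega)).symm
        exact hne this
      · -- b = p ++ x :: (s ++ [j]) so PostLT b v
        apply hb
        left; right
        exact ⟨p, s ++ [j], t, x, y, hxy, by simp [hj, hA], hV⟩
    · -- b = v ++ [j] : too long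
      have := congrArg List.length hj
      have := b.property
      simp [hleaf] at *
      omega
  · -- a = b ++ [j]
    refine ⟨j, hj, ?_⟩
    rcases ha with hlt | rfl
    · rcases hlt with ⟨hpre, hne⟩ | ⟨p, s, t, x, y, hxy, hA, hV⟩
      · have h1 := hpre.length_le
        have h2 := a.property
        have : a.val = v.val := (hpre.eq_of_length_le (by omega)).symm
        exact absurd this hne
      · rcases List.eq_nil_or_concat s with rfl | ⟨s', k, rfl⟩
        · -- a = p ++ [x] = b ++ [j], so b = p
          have hbp : b.val = p ∧ ([j] : List (Fin w)) = [x] := by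
            apply List.append_inj (hj.symm.trans hA) ?_
            have := congrArg List.length hA
            have := congrArg List.length hj
            simp at *; omega
          refine ⟨?_, ?_⟩
          · rw [hbp.1, hV]; exact ⟨y :: t, rfl⟩
          · intro hbv
            have := congrArg List.length hV
            rw [← hbv, hbp.1] at hV
            simp at hV
        · -- s = s' ++ [k] : b = p ++ x :: s', PostLT b v, contradiction
          exfalso
          apply hb
          left; right
          have hA' : a.val = (p ++ x :: s') ++ [k] := by rw [hA]; simp
          have hbk : b.val = p ++ x :: s' ∧ ([j] : List (Fin w)) = [k] := by
            apply List.append_inj (hj.symm.trans hA') ?_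
            have := congrArg List.length hA'
            have := congrArg List.length hj
            simp at *; omega
          exact ⟨p, s', t, x, y, hxy, hbk.1, hV⟩
    · -- a = v : b is parent of v
      refine ⟨⟨[j], hj.symm⟩, ?_⟩
      intro hbv
      rw [hbv] at hj
      simp at hj

theorem stmt_15 (w D : ℕ) (hw : 2 ≤ w) (hD : 1 ≤ D)
    (v : TVert w D) (hleaf : v.val.length = D)
    (hnotlast : ∃ u : TVert w D, u.val.length = D ∧ PostLT v.val u.val) :
    (∀ a b : TVert w D, (TreeGraph w D).Adj a b →
        PostLE a v → ¬ PostLE b v → (IsAncestor a v ∨ IsAncestor b v)) ∧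
      Nat.card {e : Sym2 (TVert w D) //
          e ∈ (TreeGraph w D).edgeSet ∧
          ∃ a b : TVert w D, e = s(a, b) ∧ PostLE a v ∧ ¬ PostLE b v} ≤ D * w := by
  constructor
  · intro a b hadj ha hb
    obtain ⟨j, hj, hpre, hne⟩ := key_lemma v a b hleaf hadj ha hb
    exact Or.inr ⟨hpre, fun h => hne (congrArg Subtype.val h)⟩
  · set S := {e : Sym2 (TVert w D) //
        e ∈ (TreeGraph w D).edgeSet ∧
        ∃ a b : TVert w D, e = s(a, b) ∧ PostLE a v ∧ ¬ PostLE b v} with hS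
    have htake : ∀ k : ℕ, k < D → (v.val.take k).length = k := by
      intro k hk
      simp [List.length_take, hleaf]
      omega
    let g : Fin D × Fin w → Sym2 (TVert w D) := fun kj =>
      s((⟨v.val.take kj.1 ++ [kj.2], by
          simp [htake kj.1 kj.1.isLt]⟩ : TVert w D),
        (⟨v.val.take kj.1, by
          have := htake kj.1 kj.1.isLt
          omega⟩ : TVert w D))
    have hsurj : ∀ e : S, ∃ p : Fin D × Fin w, g p = e.val := by
      rintro ⟨e, hedge, a, b, hab, ha, hb⟩
      rw [hab] at hedge
      have hadj : (TreeGraph w D).Adj a b := hedge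
      obtain ⟨j, hj, hpre, hne⟩ := key_lemma v a b hleaf hadj ha hb
      have hk : b.val.length < D := by
        have h1 := hpre.length_le
        rw [hleaf] at h1
        rcases lt_or_eq_of_le h1 with h | h
        · exact h
        · exact absurd (hpre.eq_of_length_le (by omega)) (fun hh => hne hh)
      refine ⟨(⟨b.val.length, hk⟩, j), ?_⟩
      have hbtake : b.val = v.val.take b.val.length := List.prefix_iff_eq_take.mp hpre
      have eb : (⟨v.val.take b.val.length, by rw [htake _ hk]; omega⟩ : TVert w D) = b :=
        Subtype.ext hbtake.symm
      have ea : (⟨v.val.take b.val.length ++ [j], by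
            simp only [List.length_append, List.length_singleton, htake _ hk]; omega⟩ :
          TVert w D) = a :=
        Subtype.ext ((congrArg (fun l => l ++ [j]) hbtake.symm).trans hj.symm)
      simp only [g, hab]
      exact congrArg₂ (fun x y => s(x, y)) ea eb
    let f : S → Fin D × Fin w := fun e => (hsurj e).choose
    have hf : Function.Injective f := by
      intro e1 e2 h
      apply Subtype.ext
      rw [← (hsurj e1).choose_spec, ← (hsurj e2).choose_spec]
      exact congrArg g h
    calc Nat.card S ≤ Nat.card (Fin D × Fin w) := Nat.card_le_card_of_injective f hf
      _ = D * w := by simp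
end
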